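/- arXiv:1110.5489 — 4 statements merged into one kernel-verified Lean document; each statement's English description precedes it below -/
import Mathlib

section
/- Let (X^ε, Ω, P^ε) be an irreducible, OM-reversible parametrized family of Markov chains on a finite state space, and for each ε > 0 let π^ε be a stationary distribution for P^ε such that for each x ∈ Ω the function ε ↦ π^ε(x) is Θ(ε^k) for some integer k = φ(π(x)). Then π satisfies the order-of-magnitude detailed balance condition: for all x, y ∈ Ω with P(x,y) > 0, φ(π(x)) + φ(P(x,y)) = φ(π(y)) + φ(P(y,x)). -/
open Finset

/-- `f` is `Θ(ε^k)` as `ε → 0⁺`: there are positive constants `M₁, M₂, ε̄` with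
`M₁ ε^k ≤ f ε ≤ M₂ ε^k` for all `0 < ε < ε̄`. -/
def IsTheta (f : ℝ → ℝ) (k : ℤ) : Prop :=
  ∃ M₁ M₂ εbar : ℝ, 0 < M₁ ∧ 0 < M₂ ∧ 0 < εbar ∧
    ∀ ε : ℝ, 0 < ε → ε < εbar → M₁ * ε ^ k ≤ f ε ∧ f ε ≤ M₂ * ε ^ k

/-- `P(u,v) > 0` in the order-of-magnitude sense: `ε ↦ P^ε(u,v)` is `Θ(ε^k)`
for some integer `k`. -/
def EPos {Ω : Type*} (P : ℝ → Ω → Ω → ℝ) (u v : Ω) : Prop :=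
  ∃ k : ℤ, IsTheta (fun ε => P ε u v) k

private lemma ev_of_bar {Q : ℝ → Prop} (h : ∃ εb > (0:ℝ), ∀ ε : ℝ, 0 < ε → ε < εb → Q ε) :
    ∀ᶠ ε in nhdsWithin 0 (Set.Ioi 0), Q ε := by
  obtain ⟨b, hb, h⟩ := h
  filter_upwards [Ioo_mem_nhdsGT_of_mem (Set.left_mem_Ico.2 hb)] with ε hε
  exact h ε hε.1 hε.2

private lemma isTheta_mul {f g : ℝ → ℝ} {k l : ℤ} (hf : IsTheta f k) (hg : IsTheta g l) :
    IsTheta (fun ε => f ε * g ε) (k + l) := by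
  obtain ⟨A₁, A₂, a, hA₁, hA₂, ha, hf⟩ := hf
  obtain ⟨B₁, B₂, b, hB₁, hB₂, hb, hg⟩ := hg
  refine ⟨A₁ * B₁, A₂ * B₂, min a b, by positivity, by positivity, lt_min ha hb, ?_⟩
  intro ε hε hεm
  obtain ⟨hf1, hf2⟩ := hf ε hε (hεm.trans_le (min_le_left _ _))
  obtain ⟨hg1, hg2⟩ := hg ε hε (hεm.trans_le (min_le_right _ _))
  have hεk : (0:ℝ) < ε ^ k := zpow_pos hε k
  have hεl : (0:ℝ) < ε ^ l := zpow_pos hε l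
  have hsplit : ε ^ (k + l) = ε ^ k * ε ^ l := zpow_add₀ (ne_of_gt hε) k l
  constructor
  · calc A₁ * B₁ * ε ^ (k + l) = (A₁ * ε ^ k) * (B₁ * ε ^ l) := by rw [hsplit]; ring
      _ ≤ f ε * g ε := mul_le_mul hf1 hg1 (by positivity) (le_trans (by positivity) hf1)
  · calc f ε * g ε ≤ (A₂ * ε ^ k) * (B₂ * ε ^ l) :=
          mul_le_mul hf2 hg2 (le_trans (by positivity) hg1) (by positivity)
      _ = A₂ * B₂ * ε ^ (k + l) := by rw [hsplit]; ring

private lemma ev_sub_pos {f g : ℝ → ℝ} {k l : ℤ} (hf : IsTheta f k) (hg : IsTheta g l)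
    (hkl : k < l) : ∀ᶠ ε in nhdsWithin 0 (Set.Ioi 0), 0 < f ε - g ε := by
  obtain ⟨A₁, A₂, a, hA₁, hA₂, ha, hf⟩ := hf
  obtain ⟨B₁, B₂, b, hB₁, hB₂, hb, hg⟩ := hg
  apply ev_of_bar
  refine ⟨min (min a b) (min 1 (A₁ / B₂)), by positivity, ?_⟩
  intro ε hε hεm
  have hεa : ε < a := hεm.trans_le ((min_le_left _ _).trans (min_le_left _ _))
  have hεb : ε < b := hεm.trans_le ((min_le_left _ _).trans (min_le_right _ _))
  have hε1 : ε < 1 := hεm.trans_le ((min_le_right _ _).trans (min_le_left _ _))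
  have hεA : ε < A₁ / B₂ := hεm.trans_le ((min_le_right _ _).trans (min_le_right _ _))
  have h1 := (hf ε hε hεa).1
  have h2 := (hg ε hε hεb).2
  have hεk : (0:ℝ) < ε ^ k := zpow_pos hε k
  have hd : ε ^ l ≤ ε * ε ^ k := by
    have e1 : ε ^ l = ε * ε ^ (l - 1) := by
      rw [← zpow_one_add₀ (ne_of_gt hε)]
      congr 1
      omega
    rw [e1]
    have e2 : ε ^ (l - 1) ≤ ε ^ k :=
      zpow_le_zpow_right_of_le_one₀ hε hε1.le (by omega)
    nlinarith
  have hBA : B₂ * ε < A₁ := by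
    rw [lt_div_iff₀ hB₂] at hεA
    nlinarith
  have : g ε < A₁ * ε ^ k := by
    calc g ε ≤ B₂ * ε ^ l := h2
      _ ≤ B₂ * (ε * ε ^ k) := by nlinarith
      _ < A₁ * ε ^ k := by nlinarith
  linarith

private lemma exists_crossing {Ω : Type*} (E : Ω → Ω → Prop) (S : Ω → Prop) :
    ∀ (r : ℕ) (c : ℕ → Ω), S (c 0) → ¬ S (c r) → (∀ i < r, E (c i) (c (i + 1))) →
      ∃ a b, S a ∧ ¬ S b ∧ E a b := by
  intro r
  induction r with
  | zero => intro c h0 hr _; exact absurd h0 hr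
  | succ n ih =>
    intro c h0 hr hE
    by_cases h1 : S (c 1)
    · exact ih (fun i => c (i + 1)) h1 hr (fun i hi => hE (i + 1) (by omega))
    · exact ⟨c 0, c 1, h0, h1, hE 0 (by omega)⟩

/-- Main theorem: the stationary distribution of a finite, irreducible, OM-reversible
parametrized family of Markov chains satisfies order-of-magnitude detailed balance:
for all `x, y` with `P(x,y) > 0`, `φ(π(x)) + φ(P(x,y)) = φ(π(y)) + φ(P(y,x))`. -/
theorem stationary_satisfies_OM_detailed_balance
    {Ω : Type*} [Fintype Ω] (P : ℝ → Ω → Ω → ℝ)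
    (hstoch : ∀ ε : ℝ, 0 < ε → (∀ u v : Ω, 0 ≤ P ε u v) ∧ ∀ u : Ω, ∑ v, P ε u v = 1)
    (hzero : ∀ u v : Ω, ¬ EPos P u v →
      ∃ εbar > (0 : ℝ), ∀ ε : ℝ, 0 < ε → ε < εbar → P ε u v = 0)
    (hsym : ∀ u v : Ω, EPos P u v ↔ EPos P v u)
    (φP : Ω → Ω → ℤ)
    (hφP : ∀ u v : Ω, EPos P u v → IsTheta (fun ε => P ε u v) (φP u v))
    (hirr : ∀ u v : Ω, ∃ (r : ℕ) (c : ℕ → Ω),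
      c 0 = u ∧ c r = v ∧ ∀ i < r, EPos P (c i) (c (i + 1)))
    (homrev : ∃ ν : Ω → ℤ, ∀ u v : Ω, EPos P u v → ν u + φP u v = ν v + φP v u)
    (π : ℝ → Ω → ℝ)
    (hstat : ∀ ε : ℝ, 0 < ε → (∀ x : Ω, 0 ≤ π ε x) ∧ (∑ x, π ε x) = 1 ∧
      ∀ y : Ω, (∑ x, π ε x * P ε x y) = π ε y)
    (φπ : Ω → ℤ)
    (hφπ : ∀ x : Ω, IsTheta (fun ε => π ε x) (φπ x)) :
    ∀ x y : Ω, EPos P x y → φπ x + φP x y = φπ y + φP y x := by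
  classical
  obtain ⟨ν, hν⟩ := homrev
  intro x y hxy
  -- It suffices to show that z ↦ φπ z - ν z is constant.
  suffices hcc : ∀ z w : Ω, φπ z - ν z = φπ w - ν w by
    have h1 := hν x y hxy
    have h2 := hcc x y
    omega
  intro z w
  by_contra hzw
  obtain ⟨w₀, -, hw₀⟩ := Finset.exists_min_image Finset.univ (fun z => φπ z - ν z)
    ⟨x, Finset.mem_univ x⟩
  have hw₀' : ∀ u : Ω, φπ w₀ - ν w₀ ≤ φπ u - ν u := fun u => hw₀ u (Finset.mem_univ u)
  have hexz : ∃ z' : Ω, φπ z' - ν z' ≠ φπ w₀ - ν w₀ := by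
    by_contra h
    push_neg at h
    exact hzw ((h z).trans (h w).symm)
  obtain ⟨z', hz'⟩ := hexz
  set S : Finset Ω := Finset.univ.filter (fun u => φπ u - ν u = φπ w₀ - ν w₀) with hS
  have hmemS : ∀ u : Ω, u ∈ S ↔ φπ u - ν u = φπ w₀ - ν w₀ := by
    intro u; simp [hS]
  have hmemSc : ∀ v : Ω, v ∈ Sᶜ → φπ w₀ - ν w₀ < φπ v - ν v := by
    intro v hv
    rw [Finset.mem_compl, hmemS] at hv
    exact lt_of_le_of_ne (hw₀' v) (Ne.symm hv)
  -- find a boundary edge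
  obtain ⟨r, pth, hp0, hpr, hpe⟩ := hirr w₀ z'
  obtain ⟨a, b, haS, hbS, hab⟩ := exists_crossing (EPos P) (fun u => u ∈ S) r pth
    (by show pth 0 ∈ S; rw [hp0]; exact (hmemS w₀).2 rfl)
    (by show ¬ pth r ∈ S; rw [hpr, hmemS]; exact hz') hpe
  have hbSc : b ∈ Sᶜ := Finset.mem_compl.2 hbS
  -- exponent comparison on boundary edges
  have hlt : ∀ u ∈ S, ∀ v ∈ Sᶜ, EPos P u v → φπ u + φP u v < φπ v + φP v u := by
    intro u hu v hv huv
    have h1 := hν u v huv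
    have h2 := (hmemS u).1 hu
    have h3 := hmemSc v hv
    omega
  -- eventual positivity / nonnegativity of boundary flows
  have hpair : ∀ u ∈ S, ∀ v ∈ Sᶜ,
      ∀ᶠ ε in nhdsWithin 0 (Set.Ioi 0), 0 ≤ π ε u * P ε u v - π ε v * P ε v u := by
    intro u hu v hv
    by_cases huv : EPos P u v
    · exact (ev_sub_pos (isTheta_mul (hφπ u) (hφP u v huv))
        (isTheta_mul (hφπ v) (hφP v u ((hsym u v).1 huv)))
        (hlt u hu v hv huv)).mono (fun ε h => le_of_lt h)
    · have hvu : ¬ EPos P v u := fun h => huv ((hsym u v).2 h)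
      filter_upwards [ev_of_bar (hzero u v huv), ev_of_bar (hzero v u hvu)] with ε h1 h2
      simp [h1, h2]
  have hall : ∀ᶠ ε in nhdsWithin 0 (Set.Ioi 0),
      ∀ u ∈ S, ∀ v ∈ Sᶜ, 0 ≤ π ε u * P ε u v - π ε v * P ε v u := by
    rw [Filter.eventually_all_finset]
    intro u hu
    rw [Filter.eventually_all_finset]
    intro v hv
    exact hpair u hu v hv
  have hab_pos : ∀ᶠ ε in nhdsWithin 0 (Set.Ioi 0),
      0 < π ε a * P ε a b - π ε b * P ε b a :=
    ev_sub_pos (isTheta_mul (hφπ a) (hφP a b hab))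
      (isTheta_mul (hφπ b) (hφP b a ((hsym a b).1 hab)))
      (hlt a haS b hbSc hab)
  have hpos : ∀ᶠ ε in nhdsWithin 0 (Set.Ioi 0), ε ∈ Set.Ioi (0:ℝ) :=
    eventually_mem_nhdsWithin
  obtain ⟨ε, hε0, hnn, habp⟩ := (hpos.and (hall.and hab_pos)).exists
  rw [Set.mem_Ioi] at hε0
  obtain ⟨hPnn, hProw⟩ := hstoch ε hε0
  obtain ⟨hπnn, hπsum, hπstat⟩ := hstat ε hε0
  -- the total boundary flow vanishes
  have hF : ∑ u ∈ S, ∑ v : Ω, (π ε u * P ε u v - π ε v * P ε v u) = 0 := by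
    apply Finset.sum_eq_zero
    intro u _
    rw [Finset.sum_sub_distrib, ← Finset.mul_sum, hProw u, mul_one, hπstat u, sub_self]
  have hSS : (∑ u ∈ S, ∑ v ∈ S, (π ε u * P ε u v - π ε v * P ε v u)) = 0 := by
    calc (∑ u ∈ S, ∑ v ∈ S, (π ε u * P ε u v - π ε v * P ε v u))
        = (∑ u ∈ S, ∑ v ∈ S, π ε u * P ε u v)
          - (∑ u ∈ S, ∑ v ∈ S, π ε v * P ε v u) := by
          simp [Finset.sum_sub_distrib]
      _ = 0 := by
          rw [Finset.sum_comm (s := S) (t := S) (f := fun u v => π ε v * P ε v u)]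
          exact sub_self _
  have hsplit : ∑ u ∈ S, ∑ v : Ω, (π ε u * P ε u v - π ε v * P ε v u)
      = (∑ u ∈ S, ∑ v ∈ S, (π ε u * P ε u v - π ε v * P ε v u))
        + (∑ u ∈ S, ∑ v ∈ Sᶜ, (π ε u * P ε u v - π ε v * P ε v u)) := by
    rw [← Finset.sum_add_distrib]
    exact Finset.sum_congr rfl (fun u _ => (Finset.sum_add_sum_compl S _).symm)
  have hF0 : ∑ u ∈ S, ∑ v ∈ Sᶜ, (π ε u * P ε u v - π ε v * P ε v u) = 0 := by
    rw [hsplit, hSS, zero_add] at hF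
    exact hF
  have hFpos : 0 < ∑ u ∈ S, ∑ v ∈ Sᶜ, (π ε u * P ε u v - π ε v * P ε v u) := by
    apply Finset.sum_pos'
    · intro u hu
      exact Finset.sum_nonneg (fun v hv => hnn u hu v hv)
    · refine ⟨a, haS, ?_⟩
      apply Finset.sum_pos'
      · intro v hv
        exact hnn a haS v hv
      · exact ⟨b, hbSc, habp⟩
  exact absurd hF0 (ne_of_gt hFpos)
end

section
/- Let (X^ε, Ω, P^ε) be an irreducible parametrized family of Markov chains on a finite state space. Then the family is OM-reversible if and only if it satisfies the OM-cycle condition. -/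
open Finset

/-- For an irreducible parametrized family of Markov chains, OM-reversibility
(existence of `ν : Ω → ℤ` satisfying order-of-magnitude detailed balance) is
equivalent to the OM-Kolmogorov cycle condition. -/
theorem OM_reversible_iff_OM_cycle_condition
    {Ω : Type*} [Fintype Ω] (P : ℝ → Ω → Ω → ℝ)
    (hstoch : ∀ ε : ℝ, 0 < ε → (∀ u v : Ω, 0 ≤ P ε u v) ∧ ∀ u : Ω, ∑ v, P ε u v = 1)
    (hzero : ∀ u v : Ω, ¬ EPos P u v →
      ∃ εbar > (0 : ℝ), ∀ ε : ℝ, 0 < ε → ε < εbar → P ε u v = 0)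
    (hsym : ∀ u v : Ω, EPos P u v ↔ EPos P v u)
    (φP : Ω → Ω → ℤ)
    (hφP : ∀ u v : Ω, EPos P u v → IsTheta (fun ε => P ε u v) (φP u v))
    (hirr : ∀ u v : Ω, ∃ (r : ℕ) (c : ℕ → Ω),
      c 0 = u ∧ c r = v ∧ ∀ i < r, EPos P (c i) (c (i + 1))) :
    (∃ ν : Ω → ℤ, ∀ u v : Ω, EPos P u v → ν u + φP u v = ν v + φP v u)
    ↔ (∀ (m : ℕ) (c : ℕ → Ω), c m = c 0 → (∀ i < m, EPos P (c i) (c (i + 1))) →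
        ∑ i ∈ Finset.range m, φP (c i) (c (i + 1)) =
          ∑ i ∈ Finset.range m, φP (c (i + 1)) (c i)) := by
  constructor
  · rintro ⟨ν, hν⟩ m c hc hE
    have h1 : ∑ i ∈ Finset.range m, (φP (c i) (c (i+1)) - φP (c (i+1)) (c i)) =
        ∑ i ∈ Finset.range m, (ν (c (i+1)) - ν (c i)) := by
      refine Finset.sum_congr rfl fun i hi => ?_
      have := hν (c i) (c (i+1)) (hE i (Finset.mem_range.mp hi))
      omega
    rw [Finset.sum_range_sub (fun i => ν (c i)), hc, sub_self,
      Finset.sum_sub_distrib, sub_eq_zero] at h1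
    exact h1
  · intro hcyc
    rcases isEmpty_or_nonempty Ω with hΩ | ⟨⟨o⟩⟩
    · exact ⟨fun _ => 0, fun u v _ => (hΩ.false u).elim⟩
    choose r a h0 hr hE using fun u => hirr o u
    refine ⟨fun u => ∑ i ∈ Finset.range (r u),
      (φP (a u i) (a u (i+1)) - φP (a u (i+1)) (a u i)), ?_⟩
    intro u v huv
    set R := r u with hR
    set S := r v with hS
    set m := R + 1 + S with hm
    set c : ℕ → Ω := fun i => if i ≤ R then a u i else a v (m - i) with hcdef
    have hc0 : c 0 = o := by simp [hcdef, h0]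
    have hcm : c m = c 0 := by
      have : c m = a v 0 := by simp [hcdef, hm]; omega
      rw [this, h0, hc0]
    have hcR : c R = u := by simp [hcdef, hr]; exact hr u
    have hcR1 : c (R + 1) = v := by
      have : c (R + 1) = a v S := by
        simp only [hcdef]
        rw [if_neg (by omega)]
        congr 1
        omega
      rw [this, hr]
    have hclow : ∀ i, i ≤ R → c i = a u i := fun i hi => by simp [hcdef, hi]
    have hchigh : ∀ j, j ≤ S → c (R + 1 + j) = a v (S - j) := by
      intro j hj
      simp only [hcdef]
      rw [if_neg (by omega)]
      congr 1
      omega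
    have hEc : ∀ i < m, EPos P (c i) (c (i + 1)) := by
      intro i hi
      rcases lt_trichotomy i R with h | h | h
      · rw [hclow i (by omega), hclow (i+1) (by omega)]
        exact hE u i h
      · subst h
        rw [hcR, hcR1]
        exact huv
      · obtain ⟨j, rfl⟩ : ∃ j, i = R + 1 + j := ⟨i - R - 1, by omega⟩
        have hjS : j < S := by omega
        have e1 : c (R + 1 + j) = a v (S - j) := hchigh j (by omega)
        have e2 : c (R + 1 + j + 1) = a v (S - j - 1) := by
          have := hchigh (j+1) (by omega)
          rw [show R + 1 + j + 1 = R + 1 + (j + 1) by ring, this]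
          congr 1
        rw [e1, e2]
        have hidx : S - j = (S - j - 1) + 1 := by omega
        rw [hidx]
        exact (hsym _ _).mp (hE v (S - j - 1) (by omega))
    have key := hcyc m c hcm hEc
    have hsum : ∑ i ∈ Finset.range m, (φP (c i) (c (i+1)) - φP (c (i+1)) (c i)) = 0 := by
      rw [Finset.sum_sub_distrib, key, sub_self]
    set f : ℕ → ℤ := fun i => φP (c i) (c (i+1)) - φP (c (i+1)) (c i) with hf
    have hsplit : ∑ i ∈ Finset.range m, f i
        = (∑ i ∈ Finset.range R, f i + f R) + ∑ j ∈ Finset.range S, f (R + 1 + j) := by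
      rw [hm, Finset.sum_range_add, Finset.sum_range_succ]
    have hfirst : ∑ i ∈ Finset.range R, f i
        = ∑ i ∈ Finset.range R, (φP (a u i) (a u (i+1)) - φP (a u (i+1)) (a u i)) := by
      refine Finset.sum_congr rfl fun i hi => ?_
      have hi' := Finset.mem_range.mp hi
      simp only [hf]
      rw [hclow i (by omega), hclow (i+1) (by omega)]
    have hmid : f R = φP u v - φP v u := by
      simp only [hf]
      rw [hcR, hcR1]
    have hlast : ∑ j ∈ Finset.range S, f (R + 1 + j)
        = -∑ i ∈ Finset.range S, (φP (a v i) (a v (i+1)) - φP (a v (i+1)) (a v i)) := by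
      rw [← Finset.sum_range_reflect
        (fun i => φP (a v i) (a v (i+1)) - φP (a v (i+1)) (a v i)) S,
        ← Finset.sum_neg_distrib]
      refine Finset.sum_congr rfl fun j hj => ?_
      have hj' := Finset.mem_range.mp hj
      simp only [hf]
      have e1 : c (R + 1 + j) = a v (S - j) := hchigh j (by omega)
      have e2 : c (R + 1 + j + 1) = a v (S - j - 1) := by
        have := hchigh (j+1) (by omega)
        rw [show R + 1 + j + 1 = R + 1 + (j + 1) by ring, this]
        congr 1
      rw [e1, e2]
      have e3 : S - 1 - j = S - j - 1 := by omega
      have e4 : S - j - 1 + 1 = S - j := by omega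
      rw [e3, e4]
      ring
    rw [hsplit, hfirst, hmid, hlast] at hsum
    linarith [hsum]
end

section
/- Let (X^ε, Ω, P^ε) be a clustering process on a finite connected graph with n ≥ 1 particles, and let π^ε be stationary distributions for P^ε whose entries have integer orders of magnitude φ(π(x)). Then the set Ω₀ = {z ∈ Ω : φ(π(z)) = 0} of states with positive probability in the limit ε → 0 is exactly the set of single pole states: Ω₀ = {z ∈ Ω : |s(z)| = 1}. -/
open Finset

/-- Configurations of `n` particles on the vertex set `V`. -/
abbrev Config (V : Type) [Fintype V] (n : ℕ) := {x : V → ℕ // ∑ v, x v = n}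

noncomputable instance Config.fintype {V : Type} [Fintype V] [DecidableEq V] {n : ℕ} :
    Fintype (Config V n) :=
  Fintype.ofInjective
    (fun x : Config V n => fun v : V =>
      (⟨x.val v, Nat.lt_succ_of_le ((Finset.single_le_sum
        (f := x.val) (fun i _ => Nat.zero_le _) (Finset.mem_univ v)).trans
        (le_of_eq x.2))⟩ : Fin (n + 1)))
    (fun a b h => Subtype.ext (funext fun v => congrArg Fin.val (congrFun h v)))

/-- The configuration `x^{i,j}` obtained from `x` by moving one particle from vertex `i`
to vertex `j` (with `x^{i,i} = x`). -/
def move {V : Type} [DecidableEq V] (x : V → ℕ) (i j : V) : V → ℕ :=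
  if i = j then x else Function.update (Function.update x i (x i - 1)) j (x j + 1)

/-- The support of a configuration: the set of occupied vertices. -/
def supp {V : Type} [Fintype V] [DecidableEq V] (x : V → ℕ) : Finset V :=
  Finset.univ.filter fun v => x v ≠ 0

namespace ClusterAux

/-- `f ≲ ε^c` for small positive `ε`. -/
def OrdLE (f : ℝ → ℝ) (c : ℤ) : Prop :=
  ∃ M εb : ℝ, 0 < M ∧ 0 < εb ∧ ∀ ε : ℝ, 0 < ε → ε < εb → f ε ≤ M * ε ^ c

/-- `f ≳ ε^c` for small positive `ε`. -/
def OrdGE (f : ℝ → ℝ) (c : ℤ) : Prop :=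
  ∃ M εb : ℝ, 0 < M ∧ 0 < εb ∧ ∀ ε : ℝ, 0 < ε → ε < εb → M * ε ^ c ≤ f ε

theorem OrdLE.of_theta {f : ℝ → ℝ} {k : ℤ} (h : IsTheta f k) : OrdLE f k := by
  obtain ⟨M₁, M₂, εb, h₁, h₂, hb, H⟩ := h
  exact ⟨M₂, εb, h₂, hb, fun ε hε hεb => (H ε hε hεb).2⟩

theorem OrdGE.of_theta {f : ℝ → ℝ} {k : ℤ} (h : IsTheta f k) : OrdGE f k := by
  obtain ⟨M₁, M₂, εb, h₁, h₂, hb, H⟩ := h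
  exact ⟨M₁, εb, h₁, hb, fun ε hε hεb => (H ε hε hεb).1⟩

theorem OrdLE.mono {f : ℝ → ℝ} {c c' : ℤ} (hcc : c' ≤ c) (h : OrdLE f c) : OrdLE f c' := by
  obtain ⟨M, εb, hM, hb, H⟩ := h
  refine ⟨M, min εb 1, hM, by positivity, fun ε hε hεb => ?_⟩
  have h1 : ε < 1 := lt_of_lt_of_le hεb (min_le_right _ _)
  have := zpow_le_zpow_right_of_le_one₀ hε h1.le hcc
  exact le_trans (H ε hε (lt_of_lt_of_le hεb (min_le_left _ _)))
    (by nlinarith [this, hM.le])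

theorem OrdGE.mono {f : ℝ → ℝ} {c c' : ℤ} (hcc : c ≤ c') (h : OrdGE f c) : OrdGE f c' := by
  obtain ⟨M, εb, hM, hb, H⟩ := h
  refine ⟨M, min εb 1, hM, by positivity, fun ε hε hεb => ?_⟩
  have h1 : ε < 1 := lt_of_lt_of_le hεb (min_le_right _ _)
  have := zpow_le_zpow_right_of_le_one₀ hε h1.le hcc
  exact le_trans (by nlinarith [this, hM.le]) (H ε hε (lt_of_lt_of_le hεb (min_le_left _ _)))

theorem OrdLE.of_le {f g : ℝ → ℝ} {c : ℤ} {εb₀ : ℝ} (hb₀ : 0 < εb₀)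
    (hle : ∀ ε : ℝ, 0 < ε → ε < εb₀ → f ε ≤ g ε) (h : OrdLE g c) : OrdLE f c := by
  obtain ⟨M, εb, hM, hb, H⟩ := h
  exact ⟨M, min εb εb₀, hM, by positivity, fun ε hε hεb =>
    le_trans (hle ε hε (lt_of_lt_of_le hεb (min_le_right _ _)))
      (H ε hε (lt_of_lt_of_le hεb (min_le_left _ _)))⟩

theorem OrdGE.of_le {f g : ℝ → ℝ} {c : ℤ} {εb₀ : ℝ} (hb₀ : 0 < εb₀)
    (hle : ∀ ε : ℝ, 0 < ε → ε < εb₀ → f ε ≤ g ε) (h : OrdGE f c) : OrdGE g c := by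
  obtain ⟨M, εb, hM, hb, H⟩ := h
  exact ⟨M, min εb εb₀, hM, by positivity, fun ε hε hεb =>
    le_trans (H ε hε (lt_of_lt_of_le hεb (min_le_left _ _)))
      (hle ε hε (lt_of_lt_of_le hεb (min_le_right _ _)))⟩

theorem OrdLE.mul {f g : ℝ → ℝ} {c d : ℤ} (hf : OrdLE f c) (hg : OrdLE g d)
    (hg0 : ∀ ε : ℝ, 0 < ε → 0 ≤ g ε) : OrdLE (fun ε => f ε * g ε) (c + d) := by
  obtain ⟨M, εb, hM, hb, H⟩ := hf
  obtain ⟨N, εc, hN, hc, K⟩ := hg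
  refine ⟨M * N, min εb εc, by positivity, by positivity, fun ε hε hεb => ?_⟩
  have h1 := H ε hε (lt_of_lt_of_le hεb (min_le_left _ _))
  have h2 := K ε hε (lt_of_lt_of_le hεb (min_le_right _ _))
  have hzc : (0:ℝ) < ε ^ c := zpow_pos hε c
  have hzd : (0:ℝ) < ε ^ d := zpow_pos hε d
  calc f ε * g ε ≤ (M * ε ^ c) * (N * ε ^ d) :=
        mul_le_mul h1 h2 (hg0 ε hε) (by positivity)
    _ = M * N * ε ^ (c + d) := by rw [zpow_add₀ hε.ne']; ring

theorem OrdGE.mul {f g : ℝ → ℝ} {c d : ℤ} (hf : OrdGE f c) (hg : OrdGE g d) :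
    OrdGE (fun ε => f ε * g ε) (c + d) := by
  obtain ⟨M, εb, hM, hb, H⟩ := hf
  obtain ⟨N, εc, hN, hc, K⟩ := hg
  refine ⟨M * N, min εb εc, by positivity, by positivity, fun ε hε hεb => ?_⟩
  have h1 := H ε hε (lt_of_lt_of_le hεb (min_le_left _ _))
  have h2 := K ε hε (lt_of_lt_of_le hεb (min_le_right _ _))
  have hzc : (0:ℝ) < ε ^ c := zpow_pos hε c
  have hzd : (0:ℝ) < ε ^ d := zpow_pos hε d
  calc M * N * ε ^ (c + d) = (M * ε ^ c) * (N * ε ^ d) := by rw [zpow_add₀ hε.ne']; ring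
    _ ≤ f ε * g ε := mul_le_mul h1 h2 (by positivity) (le_trans (by positivity) h1)

theorem OrdLE.zero (c : ℤ) : OrdLE (fun _ => (0:ℝ)) c :=
  ⟨1, 1, one_pos, one_pos, fun ε hε _ => by positivity⟩

theorem OrdLE.of_eventually_zero {f : ℝ → ℝ} {c : ℤ} {εb : ℝ} (hb : 0 < εb)
    (h : ∀ ε : ℝ, 0 < ε → ε < εb → f ε = 0) : OrdLE f c :=
  ⟨1, εb, one_pos, hb, fun ε hε hεb => by rw [h ε hε hεb]; positivity⟩

theorem OrdLE.sum {ι : Type*} {s : Finset ι} {f : ι → ℝ → ℝ} {c : ℤ}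
    (h : ∀ i ∈ s, OrdLE (f i) c) : OrdLE (fun ε => ∑ i ∈ s, f i ε) c := by
  classical
  induction s using Finset.induction_on with
  | empty => simpa using OrdLE.zero c
  | insert a s hnot ih =>
    obtain ⟨M, εb, hM, hb, H⟩ := h a (mem_insert_self a s)
    obtain ⟨N, εc, hN, hc, K⟩ := ih (fun i hi => h i (mem_insert_of_mem hi))
    refine ⟨M + N, min εb εc, by positivity, by positivity, fun ε hε hεb => ?_⟩
    show ∑ i ∈ insert a s, f i ε ≤ _
    rw [Finset.sum_insert hnot]
    have := H ε hε (lt_of_lt_of_le hεb (min_le_left _ _))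
    have := K ε hε (lt_of_lt_of_le hεb (min_le_right _ _))
    have hz : (0:ℝ) < ε ^ c := zpow_pos hε c
    nlinarith

theorem ord_absurd {f : ℝ → ℝ} {c : ℤ} (h1 : OrdGE f c) (h2 : OrdLE f (c + 1)) : False := by
  obtain ⟨M, εb, hM, hb, H⟩ := h1
  obtain ⟨N, εc, hN, hc, K⟩ := h2
  set ε := min (min εb εc / 2) (M / (2 * N)) with hεdef
  have hε : 0 < ε := by positivity
  have hεb : ε < εb := by
    have h1 : ε ≤ min εb εc / 2 := min_le_left _ _
    have h2 : min εb εc ≤ εb := min_le_left _ _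
    linarith
  have hεc : ε < εc := by
    have h1 : ε ≤ min εb εc / 2 := min_le_left _ _
    have h2 : min εb εc ≤ εc := min_le_right _ _
    linarith
  have hεM : N * ε < M := by
    have h1 : ε ≤ M / (2 * N) := min_le_right _ _
    have : N * ε ≤ N * (M / (2 * N)) := by nlinarith
    have hND : N * (M / (2 * N)) = M / 2 := by field_simp
    nlinarith
  have hA := H ε hε hεb
  have hB := K ε hε hεc
  have hz : (0:ℝ) < ε ^ c := zpow_pos hε c
  have hrw : ε ^ (c + 1) = ε ^ c * ε := by rw [zpow_add_one₀ hε.ne']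
  rw [hrw] at hB
  nlinarith


variable {V : Type} [Fintype V] [DecidableEq V]

section Cfg
variable {n : ℕ}

theorem move_apply_j {x : V → ℕ} {i j : V} (hij : i ≠ j) : move x i j j = x j + 1 := by
  simp [move, hij, Function.update_self]

theorem move_apply_i {x : V → ℕ} {i j : V} (hij : i ≠ j) : move x i j i = x i - 1 := by
  simp [move, hij, Function.update_of_ne hij, Function.update_self]

theorem move_apply_other {x : V → ℕ} {i j v : V} (hij : i ≠ j) (hvi : v ≠ i) (hvj : v ≠ j) :
    move x i j v = x v := by
  simp [move, hij, Function.update_of_ne hvj, Function.update_of_ne hvi]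

theorem sum_move {n : ℕ} (x : Config V n) (i j : V) (hi : x.val i ≠ 0) :
    ∑ v, move x.val i j v = n := by
  rcases eq_or_ne i j with h | h
  · simp [move, h, x.2]
  have hjmem : j ∈ (univ : Finset V) := mem_univ j
  have himem : i ∈ (univ : Finset V) \ {j} := by simp [h]
  have e1 : ∑ v, move x.val i j v
      = (x.val j + 1) + ∑ v ∈ univ \ {j}, Function.update x.val i (x.val i - 1) v := by
    unfold move; rw [if_neg h]; rw [Finset.sum_update_of_mem hjmem]
  have e2 : ∑ v ∈ univ \ {j}, Function.update x.val i (x.val i - 1) v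
      = (x.val i - 1) + ∑ v ∈ (univ \ {j}) \ {i}, x.val v := by
    rw [Finset.sum_update_of_mem himem]
  have e3 : ∑ v, x.val v = x.val j + ∑ v ∈ univ \ {j}, x.val v := by
    rw [Finset.sum_eq_sum_sdiff_singleton_add hjmem x.val]; ring
  have e4 : ∑ v ∈ univ \ {j}, x.val v = x.val i + ∑ v ∈ (univ \ {j}) \ {i}, x.val v := by
    rw [Finset.sum_eq_sum_sdiff_singleton_add himem x.val]; ring
  have e5 := x.2
  rw [e1, e2]
  rw [e3, e4] at e5
  omega

/-- `x` with one particle moved from `i` to `j`, as a configuration. -/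
def mkCfg (x : Config V n) (i j : V) (hi : x.val i ≠ 0) : Config V n :=
  ⟨move x.val i j, sum_move x i j hi⟩

theorem mkCfg_ne (x : Config V n) (i j : V) (hi : x.val i ≠ 0) (hij : i ≠ j) :
    mkCfg x i j hi ≠ x := by
  intro hcon
  have : move x.val i j j = x.val j := by rw [show move x.val i j = (mkCfg x i j hi).val from rfl, hcon]
  rw [move_apply_j hij] at this
  omega

theorem mem_supp {x : V → ℕ} {v : V} : v ∈ supp x ↔ x v ≠ 0 := by simp [supp]

theorem supp_move_subset {x : V → ℕ} {i j : V} (hij : i ≠ j) (hj : x j ≠ 0) :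
    supp (move x i j) ⊆ supp x := by
  intro v hv
  rw [mem_supp] at hv ⊢
  rcases eq_or_ne v j with rfl | hvj
  · exact hj
  rcases eq_or_ne v i with rfl | hvi
  · rw [move_apply_i hij] at hv; omega
  · rwa [move_apply_other hij hvi hvj] at hv

theorem supp_move_merge {x : V → ℕ} {i j : V} (hij : i ≠ j) (hj : x j ≠ 0) (hi1 : x i = 1) :
    supp (move x i j) = (supp x).erase i := by
  ext v
  rw [Finset.mem_erase, mem_supp, mem_supp]
  rcases eq_or_ne v j with rfl | hvj
  · simp [move_apply_j hij, hj, Ne.symm hij]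
  rcases eq_or_ne v i with rfl | hvi
  · simp [move_apply_i hij, hi1]
  · rw [move_apply_other hij hvi hvj]; tauto

theorem supp_move_shuffle {x : V → ℕ} {i j : V} (hij : i ≠ j) (hj : x j ≠ 0) (hi2 : 2 ≤ x i) :
    supp (move x i j) = supp x := by
  ext v
  rw [mem_supp, mem_supp]
  rcases eq_or_ne v j with rfl | hvj
  · simp [move_apply_j hij]; omega
  rcases eq_or_ne v i with rfl | hvi
  · rw [move_apply_i hij]; omega
  · rw [move_apply_other hij hvi hvj]

theorem supp_move_split {x : V → ℕ} {i j : V} (hij : i ≠ j) (hj : x j = 0) (hi2 : 2 ≤ x i) :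
    supp (move x i j) = insert j (supp x) := by
  ext v
  rw [Finset.mem_insert, mem_supp, mem_supp]
  rcases eq_or_ne v j with rfl | hvj
  · simp [move_apply_j hij]
  rcases eq_or_ne v i with rfl | hvi
  · rw [move_apply_i hij]; constructor
    · intro _; right; omega
    · intro _; omega
  · rw [move_apply_other hij hvi hvj]; tauto

theorem supp_move_slide {x : V → ℕ} {i j : V} (hij : i ≠ j) (hj : x j = 0) (hi1 : x i = 1) :
    supp (move x i j) = insert j ((supp x).erase i) := by
  ext v
  rw [Finset.mem_insert, Finset.mem_erase, mem_supp, mem_supp]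
  rcases eq_or_ne v j with rfl | hvj
  · simp [move_apply_j hij]
  rcases eq_or_ne v i with rfl | hvi
  · rw [move_apply_i hij]; simp [hi1, hvj]
  · rw [move_apply_other hij hvi hvj]; tauto

theorem card_supp_move_le {x : V → ℕ} {i j : V} (hij : i ≠ j) (hi : x i ≠ 0) :
    (supp (move x i j)).card ≤ (supp x).card + 1 := by
  rcases eq_or_ne (x j) 0 with hj | hj
  · rcases eq_or_ne (x i) 1 with hi1 | hi1
    · rw [supp_move_slide hij hj hi1]
      exact le_trans (Finset.card_insert_le _ _)
        (by have := Finset.card_erase_le (a := i) (s := supp x); omega)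
    · rw [supp_move_split hij hj (by omega)]
      exact le_trans (Finset.card_insert_le _ _) (by omega)
  · exact le_trans (Finset.card_le_card (supp_move_subset hij hj)) (by omega)

/-- The single-pole configuration with all `n` particles at `v`. -/
def poleAt (n : ℕ) (v : V) : Config V n :=
  ⟨fun w => if w = v then n else 0, by simp⟩

theorem poleAt_apply_self (n : ℕ) (v : V) : (poleAt n v).val v = n := by simp [poleAt]

theorem poleAt_apply_ne (n : ℕ) {v w : V} (h : w ≠ v) : (poleAt n v).val w = 0 := by
  simp [poleAt, h]

theorem supp_nonempty {n : ℕ} (hn : 1 ≤ n) (x : Config V n) : (supp x.val).Nonempty := by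
  by_contra hcon
  rw [Finset.not_nonempty_iff_eq_empty] at hcon
  have : ∀ v, x.val v = 0 := by
    intro v
    by_contra hv
    exact (Finset.eq_empty_iff_forall_notMem.mp hcon v) (mem_supp.mpr hv)
  have hz : (n : ℕ) = 0 := by
    rw [← x.2]
    exact Finset.sum_eq_zero fun v _ => this v
  omega

theorem eq_poleAt_of_card_supp_eq_one {n : ℕ} {x : Config V n}
    (hc : (supp x.val).card = 1) : ∃ v, x = poleAt n v := by
  obtain ⟨v, hv⟩ := Finset.card_eq_one.mp hc
  have hzero : ∀ w, w ≠ v → x.val w = 0 := by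
    intro w hw
    by_contra hcon
    have : w ∈ supp x.val := mem_supp.mpr hcon
    rw [hv] at this
    exact hw (Finset.mem_singleton.mp this)
  have hval : x.val v = n := by
    have := x.2
    rw [Finset.sum_eq_single v (fun w _ hw => hzero w hw) (fun h => absurd (mem_univ v) h)] at this
    exact this
  refine ⟨v, Subtype.ext (funext fun w => ?_)⟩
  rcases eq_or_ne w v with rfl | hw
  · simp [poleAt, hval]
  · simp [poleAt, hw, hzero w hw]

end Cfg

/-- Bundle of all data and hypotheses of a clustering process with stationary
distributions of integer orders of magnitude. -/
structure CP (V : Type) [Fintype V] [DecidableEq V] where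
  G : SimpleGraph V
  hconn : G.Connected
  n : ℕ
  hn : 1 ≤ n
  P : ℝ → Config V n → Config V n → ℝ
  pi : ℝ → Config V n → ℝ
  a : Config V n → ℤ
  hPnn : ∀ ε : ℝ, 0 < ε → ∀ x y, 0 ≤ P ε x y
  hrow : ∀ ε : ℝ, 0 < ε → ∀ x, ∑ y, P ε x y = 1
  hmoves : ∀ x y, EPos P x y → y = x ∨ ∃ i j, G.Adj i j ∧ 1 ≤ x.val i ∧ y.val = move x.val i j
  hzero : ∀ x y, ¬ EPos P x y → ∃ εb > (0:ℝ), ∀ ε : ℝ, 0 < ε → ε < εb → P ε x y = 0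
  hrate : ∀ (x y) (i j : V), (G.Adj i j ∨ j = i) → 1 ≤ x.val i → y.val = move x.val i j →
    IsTheta (fun ε => P ε x y) (if x.val j = 0 then 1 else 0)
  hpinn : ∀ ε : ℝ, 0 < ε → ∀ z, 0 ≤ pi ε z
  hpisum : ∀ ε : ℝ, 0 < ε → ∑ z, pi ε z = 1
  hstat : ∀ ε : ℝ, 0 < ε → ∀ y, ∑ x, pi ε x * P ε x y = pi ε y
  hphi : ∀ z, IsTheta (fun ε => pi ε z) (a z)

namespace CP

variable (S : CP V)

/-- The order of the rate of the move `x → x^{i,j}`. -/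
def ordv (x : Config V S.n) (j : V) : ℤ := if x.val j = 0 then 1 else 0

theorem ordv_nonneg (x : Config V S.n) (j : V) : 0 ≤ S.ordv x j := by
  unfold ordv; split <;> omega

/-- The stationary flow along the pair `(x, y)`. -/
def term (x y : Config V S.n) : ℝ → ℝ := fun ε => S.pi ε x * S.P ε x y

theorem term_nonneg (x y : Config V S.n) {ε : ℝ} (hε : 0 < ε) : 0 ≤ S.term x y ε :=
  mul_nonneg (S.hpinn ε hε x) (S.hPnn ε hε x y)

theorem piLE (z : Config V S.n) : OrdLE (fun ε => S.pi ε z) (S.a z) := .of_theta (S.hphi z)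

theorem piGE (z : Config V S.n) : OrdGE (fun ε => S.pi ε z) (S.a z) := .of_theta (S.hphi z)

theorem a_nonneg (z : Config V S.n) : 0 ≤ S.a z := by
  by_contra hcon
  push_neg at hcon
  have h1 : OrdLE (fun ε => S.pi ε z) 0 := by
    refine ⟨1, 1, one_pos, one_pos, fun ε hε _ => ?_⟩
    have hle : S.pi ε z ≤ 1 := by
      rw [← S.hpisum ε hε]
      exact Finset.single_le_sum (fun w _ => S.hpinn ε hε w) (mem_univ z)
    simpa using hle
  exact ord_absurd (S.piGE z) (h1.mono (by omega))

theorem exists_a_zero : ∃ z : Config V S.n, S.a z = 0 := by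
  by_contra hcon
  push_neg at hcon
  have h1 : OrdLE (fun ε => ∑ z, S.pi ε z) 1 := by
    apply OrdLE.sum
    intro z _
    have : 1 ≤ S.a z := by have := S.a_nonneg z; have := hcon z; omega
    exact (S.piLE z).mono this
  have h2 : OrdGE (fun ε => ∑ z, S.pi ε z) 0 := by
    refine ⟨1, 1, one_pos, one_pos, fun ε hε _ => ?_⟩
    show 1 * ε ^ (0:ℤ) ≤ ∑ z, S.pi ε z
    rw [S.hpisum ε hε]
    simp
  exact ord_absurd h2 (by simpa using h1)

theorem termGE_of_move (x : Config V S.n) (i j : V) (hadj : S.G.Adj i j) (hi : x.val i ≠ 0) :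
    OrdGE (S.term x (mkCfg x i j hi)) (S.a x + S.ordv x j) := by
  have hrate := S.hrate x (mkCfg x i j hi) i j (Or.inl hadj) (by omega) rfl
  exact (S.piGE x).mul (OrdGE.of_theta hrate)

theorem termLE_of_bound {x y : Config V S.n} {c : ℤ} (hne : y ≠ x)
    (h : ∀ i j, S.G.Adj i j → 1 ≤ x.val i → y.val = move x.val i j → c ≤ S.a x + S.ordv x j) :
    OrdLE (S.term x y) c := by
  by_cases hE : EPos S.P x y
  · rcases S.hmoves x y hE with rfl | ⟨i, j, hadj, hi, hmv⟩
    · exact absurd rfl hne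
    have hrate := S.hrate x y i j (Or.inl hadj) hi hmv
    have h1 : OrdLE (S.term x y) (S.a x + S.ordv x j) := by
      refine (S.piLE x).mul (OrdLE.of_theta ?_) (fun ε hε => S.hPnn ε hε x y)
      simpa [ordv] using hrate
    exact h1.mono (h i j hadj hi hmv)
  · obtain ⟨εb, hb, H⟩ := S.hzero x y hE
    exact OrdLE.of_eventually_zero hb fun ε hε hεb => by
      simp [term, H ε hε hεb]

theorem balance (B : Finset (Config V S.n)) {ε : ℝ} (hε : 0 < ε) :
    ∑ x ∈ B, ∑ y ∈ Bᶜ, S.term x y ε = ∑ u ∈ Bᶜ, ∑ v ∈ B, S.term u v ε := by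
  have key1 : ∑ v ∈ B, S.pi ε v
      = (∑ v ∈ B, ∑ x ∈ B, S.term x v ε) + ∑ v ∈ B, ∑ x ∈ Bᶜ, S.term x v ε := by
    rw [← Finset.sum_add_distrib]
    refine Finset.sum_congr rfl fun v _ => ?_
    rw [Finset.sum_add_sum_compl B (fun x => S.term x v ε), ← S.hstat ε hε v]
    rfl
  have key2 : ∑ x ∈ B, S.pi ε x
      = (∑ x ∈ B, ∑ y ∈ B, S.term x y ε) + ∑ x ∈ B, ∑ y ∈ Bᶜ, S.term x y ε := by
    rw [← Finset.sum_add_distrib]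
    refine Finset.sum_congr rfl fun x _ => ?_
    rw [Finset.sum_add_sum_compl B (fun y => S.term x y ε)]
    unfold term
    rw [← Finset.mul_sum, S.hrow ε hε x, mul_one]
  have hcomm : ∑ v ∈ B, ∑ x ∈ B, S.term x v ε = ∑ x ∈ B, ∑ y ∈ B, S.term x y ε :=
    Finset.sum_comm
  have heq : ∑ v ∈ B, ∑ x ∈ Bᶜ, S.term x v ε = ∑ x ∈ B, ∑ y ∈ Bᶜ, S.term x y ε := by
    have := key1.symm.trans key2
    rw [hcomm] at this
    linarith
  rw [← heq]
  exact Finset.sum_comm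

/-- Master lemma: if some flow out of `B` has order `≤ t` while every flow into `B`
has order `≥ t + 1`, we get a contradiction with stationarity. -/
theorem flow_contra (B : Finset (Config V S.n)) (x₀ y₀ : Config V S.n)
    (hx₀ : x₀ ∈ B) (hy₀ : y₀ ∉ B) (t : ℤ)
    (hout : OrdGE (S.term x₀ y₀) t)
    (hin : ∀ u v, u ∉ B → v ∈ B → OrdLE (S.term u v) (t + 1)) : False := by
  have hGE : OrdGE (fun ε => ∑ x ∈ B, ∑ y ∈ Bᶜ, S.term x y ε) t := by
    refine hout.of_le one_pos (fun ε hε _ => ?_)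
    calc S.term x₀ y₀ ε ≤ ∑ y ∈ Bᶜ, S.term x₀ y ε :=
          Finset.single_le_sum (fun y _ => S.term_nonneg x₀ y hε) (Finset.mem_compl.mpr hy₀)
      _ ≤ ∑ x ∈ B, ∑ y ∈ Bᶜ, S.term x y ε :=
          Finset.single_le_sum (fun x _ => Finset.sum_nonneg fun y _ => S.term_nonneg x y hε) hx₀
  have hLE : OrdLE (fun ε => ∑ u ∈ Bᶜ, ∑ v ∈ B, S.term u v ε) (t + 1) :=
    OrdLE.sum fun u hu => OrdLE.sum fun v hv =>
      hin u v (Finset.mem_compl.mp hu) hv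
  have hGE' : OrdGE (fun ε => ∑ u ∈ Bᶜ, ∑ v ∈ B, S.term u v ε) t :=
    hGE.of_le one_pos (fun ε hε _ => le_of_eq (S.balance B hε))
  exact ord_absurd hGE' hLE

/-- `a(x^{i,j}) ≤ a(x) + ord(x → x^{i,j})`. -/
theorem a_move_le (x : Config V S.n) (i j : V) (hadj : S.G.Adj i j) (hi : x.val i ≠ 0) :
    S.a (mkCfg x i j hi) ≤ S.a x + S.ordv x j := by
  by_contra hcon
  push_neg at hcon
  set y := mkCfg x i j hi
  have h1 : OrdGE (fun ε => S.pi ε y) (S.a x + S.ordv x j) := by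
    refine (S.termGE_of_move x i j hadj hi).of_le one_pos (fun ε hε _ => ?_)
    rw [← S.hstat ε hε y]
    exact Finset.single_le_sum
      (fun w _ => mul_nonneg (S.hpinn ε hε w) (S.hPnn ε hε w y)) (mem_univ x)
  exact ord_absurd h1 ((S.piLE y).mono (by omega))

/-- Multi-pole states with two adjacent occupied sites have `a ≥ 1`. -/
theorem adj_a_ge_one (p q : V) (hadj : S.G.Adj p q) :
    ∀ (m : ℕ) (x : Config V S.n), x.val p = m → m ≠ 0 → 2 ≤ (supp x.val).card →
      x.val q ≠ 0 → 1 ≤ S.a x := by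
  have hij : p ≠ q := hadj.ne
  intro m
  induction m using Nat.strong_induction_on with
  | _ m IH =>
    intro x hxp hm0 hcard hq
    have hp : x.val p ≠ 0 := by omega
    rcases eq_or_ne m 1 with hm1 | hm1
    · -- merge-capable case
      by_contra hcon
      push_neg at hcon
      have h0 : S.a x ≤ 0 := by omega
      set k := (supp x.val).card with hk
      set B : Finset (Config V S.n) :=
        univ.filter (fun z => k ≤ (supp z.val).card) with hB
      have hxB : x ∈ B := by simp [hB]; exact le_of_eq hk
      set y₀ := mkCfg x p q hp with hy₀def
      have hy₀card : (supp y₀.val).card = k - 1 := by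
        have : supp y₀.val = (supp x.val).erase p := by
          apply supp_move_merge hij hq; omega
        rw [this, Finset.card_erase_of_mem (mem_supp.mpr hp)]
      have hy₀B : y₀ ∉ B := by
        simp only [hB, Finset.mem_filter, mem_univ, true_and, not_le, hy₀card]
        omega
      refine S.flow_contra B x y₀ hxB hy₀B (S.a x) ?_ ?_
      · have := S.termGE_of_move x p q hadj hp
        have hord : S.ordv x q = 0 := by unfold CP.ordv; rw [if_neg hq]
        rwa [hord, add_zero] at this
      · intro u v hu hv
        have hne : v ≠ u := by rintro rfl; exact hu hv
        refine S.termLE_of_bound hne ?_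
        intro i j hadj' hi hmv
        have hcv : k ≤ (supp v.val).card := by
          simp only [hB, Finset.mem_filter] at hv; exact hv.2
        have hcu : (supp u.val).card < k := by
          simp only [hB, Finset.mem_filter, mem_univ, true_and, not_le] at hu; exact hu
        have hj : u.val j = 0 := by
          by_contra hj
          have hsub : supp v.val ⊆ supp u.val := by
            rw [hmv]; exact supp_move_subset hadj'.ne hj
          have := Finset.card_le_card hsub
          omega
        have : S.ordv u j = 1 := by unfold CP.ordv; rw [if_pos hj]
        rw [this]
        have := S.a_nonneg u
        omega
    · -- shuffle towards the merge-capable case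
      have hm2 : 2 ≤ m := by omega
      set x' := mkCfg x p q hp with hx'def
      have hx'p : x'.val p = m - 1 := by
        show move x.val p q p = m - 1
        rw [move_apply_i hij, hxp]
      have hx'q : x'.val q ≠ 0 := by
        show move x.val p q q ≠ 0
        rw [move_apply_j hij]; omega
      have hsupp : supp x'.val = supp x.val := by
        apply supp_move_shuffle hij hq; omega
      have h1 : 1 ≤ S.a x' := by
        refine IH (m-1) (by omega) x' hx'p (by omega) ?_ hx'q
        rw [hsupp]; exact hcard
      have h2 := S.a_move_le x p q hadj hp
      have hord : S.ordv x q = 0 := by unfold CP.ordv; rw [if_neg hq]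
      rw [hord, add_zero] at h2
      exact le_trans h1 (le_trans h2 (le_refl _))

theorem pole_val_ne_zero_eq {u i : V} (hi : (poleAt S.n u).val i ≠ 0) : i = u := by
  by_contra h
  exact hi (poleAt_apply_ne S.n h)

theorem poleAt_ne {u v : V} (huv : v ≠ u) : poleAt S.n v ≠ poleAt S.n u := by
  intro hcon
  have h1 : (poleAt S.n v).val u = 0 := poleAt_apply_ne S.n (Ne.symm huv)
  rw [hcon, poleAt_apply_self] at h1
  have := S.hn
  omega

/-- Any flow into the pole at `u` has order at least `a(pole_u) + 1`;
dually, in-terms of the complement of `{pole u}` have this bound. -/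
theorem pole_in_bound (u : V) {c : ℤ} (hc : c ≤ S.a (poleAt S.n u)) :
    ∀ v, v ≠ poleAt S.n u → OrdLE (S.term (poleAt S.n u) v) (c + 1) := by
  intro v hne
  refine S.termLE_of_bound hne ?_
  intro i j hadj hi hmv
  have hiu : i = u := S.pole_val_ne_zero_eq (by omega)
  have hju : j ≠ u := by rw [← hiu]; exact hadj.ne'
  have hj : (poleAt S.n u).val j = 0 := poleAt_apply_ne S.n hju
  have : S.ordv (poleAt S.n u) j = 1 := by unfold CP.ordv; rw [if_pos hj]
  rw [this]
  omega

/-- Two-site configuration. -/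
def twoCfg (u v : V) (huv : u ≠ v) (c d : ℕ) (h : c + d = S.n) : Config V S.n :=
  ⟨fun w => if w = u then c else if w = v then d else 0, by
    have e1 : ∑ w, (fun w => if w = u then c else if w = v then d else 0) w
        = c + ∑ w ∈ univ.erase u, (if w = v then d else 0) := by
      rw [← Finset.add_sum_erase _ _ (mem_univ u)]
      simp only [if_pos rfl]
      congr 1
      refine Finset.sum_congr rfl fun w hw => ?_
      rw [if_neg (Finset.mem_erase.mp hw).1]
    have e2 : ∑ w ∈ univ.erase u, (if w = v then d else 0) = d := by
      rw [Finset.sum_ite_eq' (univ.erase u) v (fun _ => d)]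
      rw [if_pos (Finset.mem_erase.mpr ⟨Ne.symm huv, mem_univ v⟩)]
    rw [e1, e2, h]⟩

theorem twoCfg_apply_u (u v : V) (huv : u ≠ v) (c d : ℕ) (h : c + d = S.n) :
    (S.twoCfg u v huv c d h).val u = c := by simp [twoCfg]

theorem twoCfg_apply_v (u v : V) (huv : u ≠ v) (c d : ℕ) (h : c + d = S.n) :
    (S.twoCfg u v huv c d h).val v = d := by simp [twoCfg, Ne.symm huv]

theorem twoCfg_apply_other (u v : V) (huv : u ≠ v) (c d : ℕ) (h : c + d = S.n)
    {w : V} (hwu : w ≠ u) (hwv : w ≠ v) : (S.twoCfg u v huv c d h).val w = 0 := by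
  simp [twoCfg, hwu, hwv]

theorem val_move_pole_n1 (hn : S.n = 1) {u v : V} (huv : u ≠ v) :
    (poleAt S.n u).val = move (poleAt S.n v).val v u := by
  funext w
  by_cases hwu : w = u
  · rw [hwu, move_apply_j (Ne.symm huv), poleAt_apply_self, poleAt_apply_ne S.n huv]; omega
  · by_cases hwv : w = v
    · rw [hwv, move_apply_i (Ne.symm huv), poleAt_apply_self, poleAt_apply_ne S.n (Ne.symm huv)]
      omega
    · rw [move_apply_other (Ne.symm huv) hwv hwu, poleAt_apply_ne S.n hwu,
        poleAt_apply_ne S.n hwv]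

theorem twoCfg_congr (u v : V) (huv : u ≠ v) {c d c' d' : ℕ} (h : c + d = S.n)
    (h' : c' + d' = S.n) (hc : c = c') (hd : d = d') :
    S.twoCfg u v huv c d h = S.twoCfg u v huv c' d' h' := by
  subst hc; subst hd; rfl

theorem twoCfg_shift (u v : V) (huv : u ≠ v) (c d : ℕ) (hc : c ≠ 0) (h : c + d = S.n) :
    (S.twoCfg u v huv (c - 1) (d + 1) (by omega)).val
      = move (S.twoCfg u v huv c d h).val u v := by
  funext w
  by_cases hwu : w = u
  · subst hwu
    rw [move_apply_i huv]
    simp [twoCfg]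
  by_cases hwv : w = v
  · subst hwv
    rw [move_apply_j huv]
    simp [twoCfg, Ne.symm huv, huv]
  · rw [move_apply_other huv hwu hwv]
    simp [twoCfg, hwu, hwv]

theorem twoCfg_full_eq_pole (u v : V) (huv : u ≠ v) (h : S.n + 0 = S.n) :
    S.twoCfg u v huv S.n 0 h = poleAt S.n u := by
  refine Subtype.ext (funext fun w => ?_)
  by_cases hwu : w = u
  · subst hwu; rw [poleAt_apply_self]; simp [twoCfg]
  by_cases hwv : w = v
  · subst hwv; rw [poleAt_apply_ne S.n (Ne.symm huv)]; simp [twoCfg, Ne.symm huv]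
  · rw [poleAt_apply_ne S.n hwu]; simp [twoCfg, hwu, hwv]

theorem pole_a_zero_step (u v : V) (hadj : S.G.Adj u v)
    (hv : S.a (poleAt S.n v) = 0) : S.a (poleAt S.n u) = 0 := by
  have huv : u ≠ v := hadj.ne
  rcases Nat.lt_or_ge S.n 2 with hn1 | hn2
  · -- n = 1
    have hn : S.n = 1 := by have := S.hn; omega
    by_contra hcon
    have h1 : 1 ≤ S.a (poleAt S.n u) := by have := S.a_nonneg (poleAt S.n u); omega
    have hvne : (poleAt S.n v).val v ≠ 0 := by rw [poleAt_apply_self]; omega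
    have hmv : (poleAt S.n u).val = move (poleAt S.n v).val v u := S.val_move_pole_n1 hn huv
    refine S.flow_contra ({poleAt S.n u} : Finset (Config V S.n))ᶜ (poleAt S.n v) (poleAt S.n u)
      (Finset.mem_compl.mpr (by simp [S.poleAt_ne (Ne.symm huv)])) (by simp)
      (S.a (poleAt S.n v) + 1) ?_ ?_
    · have hEq : poleAt S.n u = mkCfg (poleAt S.n v) v u hvne := Subtype.ext hmv
      rw [hEq]
      have := S.termGE_of_move (poleAt S.n v) v u hadj.symm hvne
      have hord : S.ordv (poleAt S.n v) u = 1 := by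
        unfold CP.ordv; rw [if_pos (poleAt_apply_ne S.n huv)]
      rwa [hord] at this
    · intro u' v' hu' hv'
      have hu'eq : u' = poleAt S.n u := by
        have hmem : u' ∈ ({poleAt S.n u} : Finset (Config V S.n)) := by
          by_contra hcon2
          exact hu' (Finset.mem_compl.mpr hcon2)
        exact Finset.mem_singleton.mp hmem
      subst hu'eq
      have hv'ne : v' ≠ poleAt S.n u := by
        intro hcon2
        rw [hcon2] at hv'
        simp at hv'
      rw [hv]
      refine S.pole_in_bound u ?_ v' hv'ne
      omega
  · -- n ≥ 2
    have hxuvne : u ≠ v := huv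
    set xuv := S.twoCfg u v huv (S.n - 1) 1 (by omega) with hxuvdef
    have hxuv_u : xuv.val u = S.n - 1 := S.twoCfg_apply_u u v huv _ _ _
    have hxuv_v : xuv.val v = 1 := S.twoCfg_apply_v u v huv _ _ _
    have step1 : S.a (poleAt S.n u) + 1 ≤ S.a xuv := by
      by_contra hcon
      push_neg at hcon
      have hlt : S.a xuv ≤ S.a (poleAt S.n u) := by omega
      have hxv : xuv.val v ≠ 0 := by omega
      have hmv : (poleAt S.n u).val = move xuv.val v u := by
        funext w
        by_cases hwu : w = u
        · rw [hwu, move_apply_j (Ne.symm huv), poleAt_apply_self, hxuv_u]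
          omega
        by_cases hwv : w = v
        · rw [hwv, move_apply_i (Ne.symm huv), poleAt_apply_ne S.n (Ne.symm huv), hxuv_v]
        · rw [move_apply_other (Ne.symm huv) hwv hwu, poleAt_apply_ne S.n hwu,
            S.twoCfg_apply_other u v huv _ _ _ hwu hwv]
      have hxuv_ne_pole : xuv ≠ poleAt S.n u := by
        intro hcon2
        have : xuv.val v = 0 := by rw [hcon2]; exact poleAt_apply_ne S.n (Ne.symm huv)
        omega
      refine S.flow_contra ({poleAt S.n u} : Finset (Config V S.n))ᶜ xuv (poleAt S.n u)
        (Finset.mem_compl.mpr (by simpa using hxuv_ne_pole)) (by simp) (S.a xuv) ?_ ?_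
      · have hEq : poleAt S.n u = mkCfg xuv v u hxv := Subtype.ext hmv
        rw [hEq]
        have := S.termGE_of_move xuv v u hadj.symm hxv
        have hord : S.ordv xuv u = 0 := by
          unfold CP.ordv; rw [if_neg (by omega)]
        rwa [hord, add_zero] at this
      · intro u' v' hu' hv'
        have hu'eq : u' = poleAt S.n u := by
          have hmem : u' ∈ ({poleAt S.n u} : Finset (Config V S.n)) := by
            by_contra hcon2
            exact hu' (Finset.mem_compl.mpr hcon2)
          exact Finset.mem_singleton.mp hmem
        subst hu'eq
        have hv'ne : v' ≠ poleAt S.n u := by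
          intro hcon2; rw [hcon2] at hv'; simp at hv'
        exact S.pole_in_bound u hlt v' hv'ne
    have step2 : S.a xuv ≤ 1 := by
      have claim : ∀ j, j ≤ S.n - 1 →
          S.a (S.twoCfg v u (Ne.symm huv) (S.n - j) (S.n - (S.n - j)) (by omega)) ≤ 1 := by
        intro j
        induction j with
        | zero =>
          intro _
          have e0 : S.twoCfg v u (Ne.symm huv) (S.n - 0) (S.n - (S.n - 0)) (by omega)
              = poleAt S.n v :=
            (S.twoCfg_congr v u (Ne.symm huv) (by omega) (by omega)
              (by omega) (by omega)).trans (S.twoCfg_full_eq_pole v u (Ne.symm huv) (by omega))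
          rw [e0, hv]
          omega
        | succ j IHj =>
          intro hj1
          set c := S.n - j with hcdef
          set d := S.n - (S.n - j) with hddef
          have hcd : c + d = S.n := by omega
          have hc0 : c ≠ 0 := by omega
          set τ := S.twoCfg v u (Ne.symm huv) c d hcd with hτdef
          have hτvc : τ.val v = c := S.twoCfg_apply_u v u (Ne.symm huv) c d hcd
          have hτv : τ.val v ≠ 0 := by omega
          have hEq : S.twoCfg v u (Ne.symm huv) (S.n - (j+1)) (S.n - (S.n - (j+1)))
              (by omega) = mkCfg τ v u hτv := by
            have h1 : (S.twoCfg v u (Ne.symm huv) (c - 1) (d + 1) (by omega)).val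
                = move τ.val v u := S.twoCfg_shift v u (Ne.symm huv) c d hc0 hcd
            refine Subtype.ext ?_
            rw [show (mkCfg τ v u hτv).val = move τ.val v u from rfl, ← h1]
            exact congrArg Subtype.val
              (S.twoCfg_congr v u (Ne.symm huv) (by omega) (by omega) (by omega) (by omega))
          rw [hEq]
          have h2 := S.a_move_le τ v u hadj.symm hτv
          rcases Nat.eq_or_lt_of_le (Nat.zero_le j) with hj0 | hj0
          · -- j = 0 : τ is the pole at v
            have hτpole : τ = poleAt S.n v :=
              (S.twoCfg_congr v u (Ne.symm huv) hcd (by omega)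
                (by omega) (by omega)).trans
                (S.twoCfg_full_eq_pole v u (Ne.symm huv) (by omega))
            have hordle : S.ordv τ u ≤ 1 := by unfold CP.ordv; split <;> omega
            have haτ : S.a τ = 0 := by rw [hτpole]; exact hv
            omega
          · -- j ≥ 1 : site u is occupied in τ, zero-order move
            have hτu : τ.val u = d := S.twoCfg_apply_v v u (Ne.symm huv) _ _ _
            have hord : S.ordv τ u = 0 := by
              unfold CP.ordv; rw [if_neg (by omega)]
            rw [hord, add_zero] at h2
            exact le_trans h2 (IHj (by omega))
      have hEq2 : xuv = S.twoCfg v u (Ne.symm huv) (S.n - (S.n - 1)) (S.n - (S.n - (S.n - 1)))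
          (by omega) := by
        refine Subtype.ext (funext fun w => ?_)
        by_cases hwu : w = u
        · rw [hwu, hxuv_u, S.twoCfg_apply_v v u (Ne.symm huv)]
          omega
        by_cases hwv : w = v
        · rw [hwv, hxuv_v, S.twoCfg_apply_u v u (Ne.symm huv)]
          omega
        · rw [S.twoCfg_apply_other u v huv _ _ _ hwu hwv,
            S.twoCfg_apply_other v u (Ne.symm huv) _ _ _ hwv hwu]
      rw [hEq2]
      exact claim (S.n - 1) (le_refl _)
    have := S.a_nonneg (poleAt S.n u)
    omega

theorem all_poles_zero (v₀ : V) (h0 : S.a (poleAt S.n v₀) = 0) (u : V) :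
    S.a (poleAt S.n u) = 0 := by
  have haux : ∀ {x y : V} (_ : S.G.Walk x y),
      S.a (poleAt S.n y) = 0 → S.a (poleAt S.n x) = 0 := by
    intro x y p
    induction p with
    | nil => exact fun h => h
    | cons h q IH => exact fun h0' => S.pole_a_zero_step _ _ h (IH h0')
  exact (S.hconn.preconnected u v₀).elim fun p => haux p h0

/-! ### Direction B: multi-pole states have `a ≥ 1` -/

/-- A state has an adjacent occupied pair. -/
def hasAdjPair (x : Config V S.n) : Prop :=
  ∃ p q, S.G.Adj p q ∧ x.val p ≠ 0 ∧ x.val q ≠ 0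

theorem adj_a_ge_one' {x : Config V S.n} (hm : 2 ≤ (supp x.val).card)
    (hpair : S.hasAdjPair x) : 1 ≤ S.a x := by
  obtain ⟨p, q, hadj, hp, hq⟩ := hpair
  exact S.adj_a_ge_one p q hadj (x.val p) x rfl hp hm hq

/-- "System edges": single moves whose stationary flow has order at most `ε`. -/
def SEdge (x y : Config V S.n) : Prop :=
  ∃ (i j : V) (hadj : S.G.Adj i j) (hi : x.val i ≠ 0),
    y = mkCfg x i j hi ∧ S.a x + S.ordv x j ≤ 1

/-- Ancestors of `y₀` along system edges. -/
def Anc (y₀ x : Config V S.n) : Prop := Relation.ReflTransGen S.SEdge x y₀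

theorem anc_refl (y₀ : Config V S.n) : S.Anc y₀ y₀ := Relation.ReflTransGen.refl

theorem anc_head {y₀ x y : Config V S.n} (h : S.SEdge x y) (hy : S.Anc y₀ y) :
    S.Anc y₀ x := Relation.ReflTransGen.head h hy

section DirB

variable (y₀ : Config V S.n)

theorem anc_cases {x : Config V S.n} (h : S.Anc y₀ x) :
    x = y₀ ∨ ∃ y, S.SEdge x y ∧ S.Anc y₀ y := by
  rcases Relation.ReflTransGen.cases_head h with h1 | ⟨b, hb, hb2⟩
  · exact Or.inl h1
  · exact Or.inr ⟨b, hb, hb2⟩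

theorem anc_a_le_one (h00 : S.a y₀ = 0) {x : Config V S.n} (h : S.Anc y₀ x) :
    S.a x ≤ 1 := by
  rcases S.anc_cases y₀ h with rfl | ⟨y, ⟨i, j, hadj, hi, hy, hb⟩, _⟩
  · omega
  · have := S.ordv_nonneg x j
    omega

theorem y0_noadj (hm0 : 2 ≤ (supp y₀.val).card) (h00 : S.a y₀ = 0) :
    ¬ S.hasAdjPair y₀ := by
  intro hpair
  have := S.adj_a_ge_one' hm0 hpair
  omega

theorem anc_indep_a0 (h00 : S.a y₀ = 0) {x : Config V S.n} (h : S.Anc y₀ x)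
    (hnp : ¬ S.hasAdjPair x) : S.a x = 0 := by
  rcases S.anc_cases y₀ h with rfl | ⟨y, ⟨i, j, hadj, hi, hy, hb⟩, _⟩
  · exact h00
  · have hj : x.val j = 0 := by
      by_contra hj
      exact hnp ⟨i, j, hadj, hi, hj⟩
    have hord : S.ordv x j = 1 := by unfold CP.ordv; rw [if_pos hj]
    have := S.a_nonneg x
    omega

theorem supp_poleAt (hn : 1 ≤ S.n) (w : V) : supp (poleAt S.n w).val = {w} := by
  ext v
  rw [mem_supp, Finset.mem_singleton]
  constructor
  · intro hv
    by_contra hvw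
    exact hv (poleAt_apply_ne S.n hvw)
  · rintro rfl
    rw [poleAt_apply_self]
    omega

/-- Configurations of support contained in a single edge. -/
def Qp (x : Config V S.n) : Prop :=
  (supp x.val).card = 1 ∨ ((supp x.val).card = 2 ∧ S.hasAdjPair x)

theorem Qp_step {x y : Config V S.n} (he : S.SEdge x y) (hq : S.Qp x) : S.Qp y := by
  obtain ⟨i, j, hadj, hi, rfl, hb⟩ := he
  have hij : i ≠ j := hadj.ne
  rcases hq with hcard1 | ⟨hcard2, hpair⟩
  · -- x is a pole
    obtain ⟨w, rfl⟩ := eq_poleAt_of_card_supp_eq_one hcard1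
    have hiw : i = w := S.pole_val_ne_zero_eq hi
    subst hiw
    have hj : (poleAt S.n i).val j = 0 := poleAt_apply_ne S.n (Ne.symm hij)
    have hsp : supp (poleAt S.n i).val = {i} := S.supp_poleAt S.hn i
    rcases Nat.lt_or_ge S.n 2 with hn1 | hn2
    · -- n = 1 : slide, still a pole
      left
      have hi1 : (poleAt S.n i).val i = 1 := by
        rw [poleAt_apply_self]; have := S.hn; omega
      have : supp (mkCfg (poleAt S.n i) i j hi).val
          = insert j ((supp (poleAt S.n i).val).erase i) := supp_move_slide hij hj hi1
      rw [this, hsp]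
      simp
    · -- n ≥ 2 : split into the two-site adjacent state
      right
      have hi2 : 2 ≤ (poleAt S.n i).val i := by rw [poleAt_apply_self]; omega
      have hsupp : supp (mkCfg (poleAt S.n i) i j hi).val
          = insert j (supp (poleAt S.n i).val) := supp_move_split hij hj hi2
      constructor
      · rw [hsupp, hsp]
        rw [Finset.card_insert_of_notMem (by simp [Ne.symm hij])]
        simp
      · refine ⟨i, j, hadj, ?_, ?_⟩
        · show move (poleAt S.n i).val i j i ≠ 0
          rw [move_apply_i hij, poleAt_apply_self]
          omega
        · show move (poleAt S.n i).val i j j ≠ 0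
          rw [move_apply_j hij]
          omega
  · -- x is a two-site adjacent state; the move has order 0
    have hax : 1 ≤ S.a x := S.adj_a_ge_one' (by omega) hpair
    have hj : x.val j ≠ 0 := by
      intro hj0
      have : S.ordv x j = 1 := by unfold CP.ordv; rw [if_pos hj0]
      omega
    have hsub : supp (mkCfg x i j hi).val ⊆ supp x.val := supp_move_subset hij hj
    have hle : (supp (mkCfg x i j hi).val).card ≤ 2 := by
      have := Finset.card_le_card hsub
      omega
    have hge : 1 ≤ (supp (mkCfg x i j hi).val).card :=
      Finset.card_pos.mpr (supp_nonempty S.hn _)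
    rcases Nat.eq_or_lt_of_le hge with h1 | h1
    · exact Or.inl h1.symm
    · right
      have hcardeq : (supp (mkCfg x i j hi).val).card = 2 := by omega
      have hsuppeq : supp (mkCfg x i j hi).val = supp x.val :=
        Finset.eq_of_subset_of_card_le hsub (by omega)
      refine ⟨hcardeq, ?_⟩
      obtain ⟨p, q, hadj', hp, hq⟩ := hpair
      refine ⟨p, q, hadj', ?_, ?_⟩
      · have : p ∈ supp (mkCfg x i j hi).val := by rw [hsuppeq]; exact mem_supp.mpr hp
        exact mem_supp.mp this
      · have : q ∈ supp (mkCfg x i j hi).val := by rw [hsuppeq]; exact mem_supp.mpr hq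
        exact mem_supp.mp this

theorem Qp_trans {x y : Config V S.n} (h : Relation.ReflTransGen S.SEdge x y) (hq : S.Qp x) :
    S.Qp y := by
  induction h with
  | refl => exact hq
  | tail _ e IH => exact S.Qp_step e IH

theorem pole_not_anc (hm0 : 2 ≤ (supp y₀.val).card) (h00 : S.a y₀ = 0) (w : V) :
    ¬ S.Anc y₀ (poleAt S.n w) := by
  intro h
  have hq : S.Qp y₀ := S.Qp_trans h (Or.inl (by rw [S.supp_poleAt S.hn w]; simp))
  rcases hq with h1 | ⟨_, hpair⟩
  · omega
  · exact S.y0_noadj y₀ hm0 h00 hpair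

theorem anc_multi (hm0 : 2 ≤ (supp y₀.val).card) (h00 : S.a y₀ = 0)
    {x : Config V S.n} (h : S.Anc y₀ x) : 2 ≤ (supp x.val).card := by
  have hge : 1 ≤ (supp x.val).card := Finset.card_pos.mpr (supp_nonempty S.hn _)
  rcases Nat.eq_or_lt_of_le hge with h1 | h1
  · obtain ⟨w, rfl⟩ := eq_poleAt_of_card_supp_eq_one h1.symm
    exact absurd h (S.pole_not_anc y₀ hm0 h00 w)
  · omega

/-- The set of ancestors of `y₀`, as a finite set. -/
noncomputable def AncSet : Finset (Config V S.n) :=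
  @Finset.filter _ (S.Anc y₀) (Classical.decPred _) Finset.univ

theorem mem_AncSet {x : Config V S.n} : x ∈ S.AncSet y₀ ↔ S.Anc y₀ x := by
  unfold AncSet
  rw [@Finset.mem_filter _ (S.Anc y₀) (Classical.decPred _) _ x]
  exact ⟨fun h => h.2, fun h => ⟨Finset.mem_univ x, h⟩⟩

theorem multi_a_zero_false (hm0 : 2 ≤ (supp y₀.val).card) (h00 : S.a y₀ = 0) :
    False := by
  classical
  by_cases hexit : ∃ x y, S.Anc y₀ x ∧ S.SEdge x y ∧ ¬ S.Anc y₀ y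
  · -- Case A: a system edge exits the set of ancestors
    obtain ⟨x₀, yy, hax, hedge, hnay⟩ := hexit
    obtain ⟨i, j, hadj, hi, rfl, hb⟩ := hedge
    refine S.flow_contra (S.AncSet y₀) x₀ (mkCfg x₀ i j hi)
      ((S.mem_AncSet y₀).mpr hax)
      (fun hmem => hnay ((S.mem_AncSet y₀).mp hmem))
      (S.a x₀ + S.ordv x₀ j)
      (S.termGE_of_move x₀ i j hadj hi) ?_
    intro u v hu hv
    have hu' : ¬ S.Anc y₀ u := fun h => hu ((S.mem_AncSet y₀).mpr h)
    have hv' : S.Anc y₀ v := (S.mem_AncSet y₀).mp hv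
    have hne : v ≠ u := by rintro rfl; exact hu' hv'
    refine S.termLE_of_bound hne ?_
    intro i' j' hadj' hi' hmv
    by_contra hcon
    push_neg at hcon
    have hble : S.a u + S.ordv u j' ≤ 1 := by omega
    have hedge' : S.SEdge u v :=
      ⟨i', j', hadj', by omega, Subtype.ext hmv, hble⟩
    exact hu' (S.anc_head hedge' hv')
  · -- Case B: ancestors are closed under system edges
    push_neg at hexit
    have hcl : ∀ x y, S.Anc y₀ x → S.SEdge x y → S.Anc y₀ y := fun x y hx he =>
      hexit x y hx he
    set s₀ := ((S.AncSet y₀).image (fun x => (supp x.val).card)).min'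
      ⟨(supp y₀.val).card, Finset.mem_image_of_mem _ ((S.mem_AncSet y₀).mpr (S.anc_refl y₀))⟩
      with hs₀def
    have hs₀min : ∀ x, S.Anc y₀ x → s₀ ≤ (supp x.val).card := by
      intro x hx
      exact Finset.min'_le _ _ (Finset.mem_image_of_mem _ ((S.mem_AncSet y₀).mpr hx))
    have hs₀ex : ∃ z, S.Anc y₀ z ∧ (supp z.val).card = s₀ := by
      have := Finset.min'_mem ((S.AncSet y₀).image (fun x => (supp x.val).card))
        ⟨(supp y₀.val).card, Finset.mem_image_of_mem _ ((S.mem_AncSet y₀).mpr (S.anc_refl y₀))⟩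
      rw [Finset.mem_image] at this
      obtain ⟨z, hz, hz2⟩ := this
      exact ⟨z, (S.mem_AncSet y₀).mp hz, hz2⟩
    have hs₀2 : 2 ≤ s₀ := by
      obtain ⟨z, hz, hzc⟩ := hs₀ex
      have := S.anc_multi y₀ hm0 h00 hz
      omega
    -- W1: an ancestor at minimal support level with an adjacent occupied pair
    -- is impossible.
    have W1 : ∀ m (h : Config V S.n), S.Anc y₀ h → (supp h.val).card = s₀ →
        ∀ p q, S.G.Adj p q → h.val p ≠ 0 → h.val q ≠ 0 → h.val p = m → False := by
      intro m
      induction m using Nat.strong_induction_on with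
      | _ m IH =>
        intro h hAnc hcard p q hadj hp hq hpm
        have hpq : p ≠ q := hadj.ne
        have hale : S.a h ≤ 1 := S.anc_a_le_one y₀ h00 hAnc
        have hage : 1 ≤ S.a h := S.adj_a_ge_one' (by omega) ⟨p, q, hadj, hp, hq⟩
        have hord : S.ordv h q = 0 := by unfold CP.ordv; rw [if_neg hq]
        have hedge : S.SEdge h (mkCfg h p q hp) :=
          ⟨p, q, hadj, hp, rfl, by omega⟩
        have hAnc' : S.Anc y₀ (mkCfg h p q hp) := hcl h _ hAnc hedge
        rcases Nat.lt_or_ge m 2 with hm1 | hm2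
        · -- m = 1: the merge drops the support level below s₀
          have hm1' : h.val p = 1 := by omega
          have hsupp : supp (mkCfg h p q hp).val = (supp h.val).erase p :=
            supp_move_merge hpq hq hm1'
          have hcard' : (supp (mkCfg h p q hp).val).card = s₀ - 1 := by
            rw [hsupp, Finset.card_erase_of_mem (mem_supp.mpr hp), hcard]
          have := hs₀min _ hAnc'
          omega
        · -- m ≥ 2: shuffle and induct
          have hsupp : supp (mkCfg h p q hp).val = supp h.val :=
            supp_move_shuffle hpq hq (by omega)
          have hp' : (mkCfg h p q hp).val p ≠ 0 := by
            show move h.val p q p ≠ 0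
            rw [move_apply_i hpq]
            omega
          have hq' : (mkCfg h p q hp).val q ≠ 0 := by
            show move h.val p q q ≠ 0
            rw [move_apply_j hpq]
            omega
          have hpm' : (mkCfg h p q hp).val p = m - 1 := by
            show move h.val p q p = m - 1
            rw [move_apply_i hpq]
            omega
          exact IH (m - 1) (by omega) (mkCfg h p q hp) hAnc'
            (by rw [hsupp]; exact hcard) p q hadj hp' hq' hpm'
    -- W23: an independent ancestor at minimal support level is impossible.
    have W23 : ∀ len (z : Config V S.n) (p q : V) (w : S.G.Walk p q),
        w.length = len → S.Anc y₀ z → (supp z.val).card = s₀ → ¬ S.hasAdjPair z →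
        z.val p ≠ 0 → z.val q ≠ 0 → p ≠ q → False := by
      intro len
      induction len using Nat.strong_induction_on with
      | _ len IH =>
        intro z p q w hwlen hAnc hcard hindep hp hq hpq
        have haz : S.a z = 0 := S.anc_indep_a0 y₀ h00 hAnc hindep
        cases w with
        | nil => exact hpq rfl
        | @cons _ p₁ _ e w' =>
          by_cases hp₁ : z.val p₁ ≠ 0
          · exact hindep ⟨p, p₁, e, hp, hp₁⟩
          push_neg at hp₁
          have hpp₁ : p ≠ p₁ := e.ne
          have hp₁q : p₁ ≠ q := by
            intro hcon
            rw [hcon] at hp₁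
            exact hq hp₁
          -- transfer the whole mass at p to p₁ along system edges
          have claim : ∀ k, 1 ≤ k → k ≤ z.val p → ∃ zk : Config V S.n,
              S.Anc y₀ zk ∧ zk.val p = z.val p - k ∧ zk.val p₁ = k ∧
              ∀ v, v ≠ p → v ≠ p₁ → zk.val v = z.val v := by
            intro k
            induction k with
            | zero => omega
            | succ k IHk =>
              intro _ hk2
              rcases Nat.eq_or_lt_of_le (show 1 ≤ k + 1 by omega) with h1 | h1
              · -- first step: slide/split one particle from p to p₁
                have hk0 : k = 0 := by omega
                subst hk0
                refine ⟨mkCfg z p p₁ hp, ?_, ?_, ?_, ?_⟩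
                · refine hcl z _ hAnc ⟨p, p₁, e, hp, rfl, ?_⟩
                  have : S.ordv z p₁ = 1 := by unfold CP.ordv; rw [if_pos hp₁]
                  omega
                · show move z.val p p₁ p = z.val p - 1
                  rw [move_apply_i hpp₁]
                · show move z.val p p₁ p₁ = 0 + 1
                  rw [move_apply_j hpp₁, hp₁]
                · intro v hvp hvp₁
                  show move z.val p p₁ v = z.val v
                  exact move_apply_other hpp₁ hvp hvp₁
              · -- subsequent steps: zero-order transfers inside the pair
                have hk1 : 1 ≤ k := by omega
                obtain ⟨zk, hzkAnc, hzkp, hzkp₁, hzkoth⟩ := IHk hk1 (by omega)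
                have hzkp0 : zk.val p ≠ 0 := by omega
                have hzkp₁0 : zk.val p₁ ≠ 0 := by omega
                have hcard2 : 2 ≤ (supp zk.val).card := by
                  have hsub : ({p, p₁} : Finset V) ⊆ supp zk.val := by
                    intro v hv
                    rcases Finset.mem_insert.mp hv with rfl | hv
                    · exact mem_supp.mpr hzkp0
                    · rw [Finset.mem_singleton.mp hv]
                      exact mem_supp.mpr hzkp₁0
                  have := Finset.card_le_card hsub
                  rwa [Finset.card_insert_of_notMem (by simp [hpp₁]),
                    Finset.card_singleton] at this
                have hazk_le : S.a zk ≤ 1 := S.anc_a_le_one y₀ h00 hzkAnc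
                have hazk_ge : 1 ≤ S.a zk :=
                  S.adj_a_ge_one' hcard2 ⟨p, p₁, e, hzkp0, hzkp₁0⟩
                have hordzk : S.ordv zk p₁ = 0 := by
                  unfold CP.ordv; rw [if_neg hzkp₁0]
                refine ⟨mkCfg zk p p₁ hzkp0, ?_, ?_, ?_, ?_⟩
                · exact hcl zk _ hzkAnc ⟨p, p₁, e, hzkp0, rfl, by omega⟩
                · show move zk.val p p₁ p = z.val p - (k + 1)
                  rw [move_apply_i hpp₁]
                  omega
                · show move zk.val p p₁ p₁ = k + 1
                  rw [move_apply_j hpp₁]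
                  omega
                · intro v hvp hvp₁
                  show move zk.val p p₁ v = z.val v
                  rw [move_apply_other hpp₁ hvp hvp₁]
                  exact hzkoth v hvp hvp₁
          obtain ⟨zf, hzfAnc, hzfp, hzfp₁, hzfoth⟩ :=
            claim (z.val p) (by omega) (le_refl _)
          have hzfp0 : zf.val p = 0 := by omega
          have hzfp₁0 : zf.val p₁ ≠ 0 := by omega
          have hsuppzf : supp zf.val = insert p₁ ((supp z.val).erase p) := by
            ext v
            rw [Finset.mem_insert, Finset.mem_erase, mem_supp, mem_supp]
            by_cases hvp₁ : v = p₁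
            · rw [hvp₁]
              simp [hzfp₁0]
            by_cases hvp : v = p
            · rw [hvp]
              simp [hzfp0, hpp₁]
            · rw [hzfoth v hvp hvp₁]
              constructor
              · intro hv
                exact Or.inr ⟨hvp, hv⟩
              · rintro (h | h)
                · exact absurd h hvp₁
                · exact h.2
          have hcardzf : (supp zf.val).card = s₀ := by
            rw [hsuppzf]
            have hp₁notin : p₁ ∉ (supp z.val).erase p := by
              rw [Finset.mem_erase, mem_supp]
              rintro ⟨-, h⟩
              exact h hp₁
            rw [Finset.card_insert_of_notMem hp₁notin,
              Finset.card_erase_of_mem (mem_supp.mpr hp), hcard]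
            omega
          by_cases hadjzf : S.hasAdjPair zf
          · obtain ⟨p', q', hadj', hp', hq'⟩ := hadjzf
            exact W1 (zf.val p') zf hzfAnc hcardzf p' q' hadj' hp' hq' rfl
          · -- recurse along the rest of the walk
            have hzfq : zf.val q ≠ 0 := by
              rw [hzfoth q (Ne.symm hpq) (Ne.symm hp₁q)]
              exact hq
            exact IH w'.length (by rw [← hwlen]; simp [SimpleGraph.Walk.length_cons]) zf p₁ q w'
              rfl hzfAnc hcardzf hadjzf hzfp₁0 hzfq hp₁q
    -- conclude: take an ancestor at the minimal level
    obtain ⟨z₀, hz₀Anc, hz₀card⟩ := hs₀ex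
    by_cases hadjz₀ : S.hasAdjPair z₀
    · obtain ⟨p, q, hadj, hp, hq⟩ := hadjz₀
      exact W1 (z₀.val p) z₀ hz₀Anc hz₀card p q hadj hp hq rfl
    · have hcard2 : 2 ≤ (supp z₀.val).card := by omega
      obtain ⟨p, hpmem, q, hqmem, hpq⟩ :=
        Finset.one_lt_card.mp (show 1 < (supp z₀.val).card by omega)
      have hp : z₀.val p ≠ 0 := mem_supp.mp hpmem
      have hq : z₀.val q ≠ 0 := mem_supp.mp hqmem
      exact (S.hconn.preconnected p q).elim fun w =>
        W23 w.length z₀ p q w rfl hz₀Anc hz₀card hadjz₀ hp hq hpq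

end DirB

/-- The main theorem, in bundled form. -/
theorem sets_eq : {z : Config V S.n | S.a z = 0} = {z | (supp z.val).card = 1} := by
  ext z
  simp only [Set.mem_setOf_eq]
  constructor
  · intro h0
    have hge : 1 ≤ (supp z.val).card := Finset.card_pos.mpr (supp_nonempty S.hn z)
    by_contra hne
    exact S.multi_a_zero_false z (by omega) h0
  · intro hc
    obtain ⟨v, rfl⟩ := eq_poleAt_of_card_supp_eq_one hc
    obtain ⟨z₀, hz₀⟩ := S.exists_a_zero
    have hz₀c : (supp z₀.val).card = 1 := by
      have hge : 1 ≤ (supp z₀.val).card := Finset.card_pos.mpr (supp_nonempty S.hn z₀)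
      by_contra hne
      exact S.multi_a_zero_false z₀ (by omega) hz₀
    obtain ⟨v₀, hv₀⟩ := eq_poleAt_of_card_supp_eq_one hz₀c
    rw [hv₀] at hz₀
    exact S.all_poles_zero v₀ hz₀ v

end CP

end ClusterAux

/-- For a clustering process with stationary distributions `π^ε` of integer orders of
magnitude, the set `Ω₀ = {z : φ(π(z)) = 0}` of states with positive limiting probability
is exactly the set of single pole states `{z : |s(z)| = 1}`. -/
theorem clustering_limit_support_is_single_pole_states
    {V : Type} [Fintype V] [DecidableEq V]
    (G : SimpleGraph V) (hconn : G.Connected)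
    (n : ℕ) (hn : 1 ≤ n)
    (P : ℝ → Config V n → Config V n → ℝ)
    (hstoch : ∀ ε : ℝ, 0 < ε →
      (∀ x y : Config V n, 0 ≤ P ε x y) ∧ ∀ x : Config V n, ∑ y, P ε x y = 1)
    (hmoves : ∀ x y : Config V n, EPos P x y →
      y = x ∨ ∃ i j : V, G.Adj i j ∧ 1 ≤ x.val i ∧ y.val = move x.val i j)
    (hzero : ∀ x y : Config V n, ¬ EPos P x y →
      ∃ εbar > (0 : ℝ), ∀ ε : ℝ, 0 < ε → ε < εbar → P ε x y = 0)
    (hsym : ∀ x y : Config V n, EPos P x y ↔ EPos P y x)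
    (hrate : ∀ (x y : Config V n) (i j : V), (G.Adj i j ∨ j = i) → 1 ≤ x.val i →
      y.val = move x.val i j →
      IsTheta (fun ε => P ε x y) (if x.val j = 0 then 1 else 0))
    (π : ℝ → Config V n → ℝ)
    (hstat : ∀ ε : ℝ, 0 < ε → (∀ z : Config V n, 0 ≤ π ε z) ∧ (∑ z, π ε z) = 1 ∧
      ∀ y : Config V n, (∑ x, π ε x * P ε x y) = π ε y)
    (φπ : Config V n → ℤ)
    (hφπ : ∀ z : Config V n, IsTheta (fun ε => π ε z) (φπ z)) :
    {z : Config V n | φπ z = 0} = {z : Config V n | (supp z.val).card = 1} :=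
  ClusterAux.CP.sets_eq
    { G := G, hconn := hconn, n := n, hn := hn, P := P, pi := π, a := φπ
      hPnn := fun ε hε => (hstoch ε hε).1
      hrow := fun ε hε => (hstoch ε hε).2
      hmoves := hmoves
      hzero := hzero
      hrate := hrate
      hpinn := fun ε hε => (hstat ε hε).1
      hpisum := fun ε hε => (hstat ε hε).2.1
      hstat := fun ε hε => (hstat ε hε).2.2
      hphi := hφπ }
end

section
/- Let N be a connected d-regular graph with m vertices, let n ≥ 1, and let f be a strictly positive clustering tendency. For each ε > 0 define a matrix P^ε on the configuration space Ω by: P^ε(x, x^{i,j}) = (1/d)·(x_i/n)·f_ε(x_j)/(f_ε(x_j) + f_ε(x_i)) whenever i ≠ j, v_i ∼ v_j and x_i ≥ 1; P^ε(x,y) = 0 for every other y ≠ x; and P^ε(x,x) = 1 − Σ_{y≠x} P^ε(x,y). Then each P^ε is a stochastic matrix and the family (X^ε, Ω, P^ε) is a clustering process: for every x with x_i ≥ 1 and every j with v_j ∼ v_i or j = i, the function ε ↦ P^ε(x, x^{i,j}) is Θ(ε¹) if x_j = 0 and Θ(ε⁰) if x_j > 0. -/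
open Finset

lemma move_apply {V : Type} [DecidableEq V] (x : V → ℕ) {i j : V} (hij : i ≠ j) (v : V) :
    move x i j v = if v = j then x j + 1 else if v = i then x i - 1 else x v := by
  rw [move, if_neg hij, Function.update_apply, Function.update_apply]

lemma sum_move {V : Type} [Fintype V] [DecidableEq V] (x : V → ℕ) {i j : V}
    (hij : i ≠ j) (hxi : 1 ≤ x i) : ∑ v, move x i j v = ∑ v, x v := by
  classical
  have hi : i ∈ (Finset.univ : Finset V) \ {j} := by simp [hij]
  rw [move, if_neg hij,
    Finset.sum_update_of_mem (Finset.mem_univ j),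
    Finset.sum_update_of_mem hi]
  have h2 : ∑ v, x v = x j + ∑ v ∈ Finset.univ \ {j}, x v :=
    Finset.sum_eq_add_sum_sdiff_singleton_of_mem (Finset.mem_univ j) x
  have h3 : ∑ v ∈ Finset.univ \ {j}, x v = x i + ∑ v ∈ (Finset.univ \ {j}) \ {i}, x v :=
    Finset.sum_eq_add_sum_sdiff_singleton_of_mem hi x
  omega

lemma move_ne {V : Type} [DecidableEq V] (x : V → ℕ) {i j : V} (hij : i ≠ j) :
    move x i j ≠ x := by
  intro h
  have := congrFun h j
  rw [move_apply x hij, if_pos rfl] at this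
  omega

lemma move_inj {V : Type} [DecidableEq V] (x : V → ℕ) {i j i' j' : V}
    (hij : i ≠ j) (hij' : i' ≠ j') (hxi : 1 ≤ x i)
    (h : move x i j = move x i' j') : i = i' ∧ j = j' := by
  have hii' : i = i' := by
    have hi := congrFun h i
    rw [move_apply x hij, move_apply x hij', if_neg hij, if_pos rfl] at hi
    by_contra hne
    by_cases hj' : i = j'
    · rw [if_pos hj', ← hj'] at hi; omega
    · rw [if_neg hj', if_neg hne] at hi; omega
  refine ⟨hii', ?_⟩
  have hj := congrFun h j
  rw [move_apply x hij, move_apply x hij', if_pos rfl] at hj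
  by_contra hne
  rw [if_neg hne] at hj
  by_cases hji' : j = i'
  · exact hij.symm (hji'.trans hii'.symm)
  · rw [if_neg hji'] at hj; omega

/-- Model 1: on a connected `d`-regular graph, the transition probabilities
`P^ε(x, x^{i,j}) = (1/d)·(x_i/n)·f_ε(x_j)/(f_ε(x_j) + f_ε(x_i))` (for `i ≠ j`, `v_i ∼ v_j`,
`x_i ≥ 1`), zero for all other off-diagonal entries, and diagonal entries making rows sum
to one, define stochastic matrices forming a clustering process. -/
theorem model_one_is_clustering_process
    {V : Type} [Fintype V] [DecidableEq V]
    (G : SimpleGraph V) [DecidableRel G.Adj] (hconn : G.Connected)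
    (d : ℕ) (hreg : ∀ v : V, G.degree v = d)
    (n : ℕ) (hn : 1 ≤ n)
    (f : ℝ → ℕ → ℝ)
    (hfpos : ∀ ε : ℝ, 0 < ε → ∀ p : ℕ, 0 < f ε p)
    (hfΘ : ∀ p : ℕ, IsTheta (fun ε => f ε p) (if p = 0 then 1 else 0))
    (P : ℝ → Config V n → Config V n → ℝ)
    (hPmove : ∀ ε : ℝ, 0 < ε → ∀ (x y : Config V n) (i j : V),
      i ≠ j → G.Adj i j → 1 ≤ x.val i → y.val = move x.val i j →
      P ε x y = (1 / (d : ℝ)) * ((x.val i : ℝ) / (n : ℝ)) *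
        (f ε (x.val j) / (f ε (x.val j) + f ε (x.val i))))
    (hPoff : ∀ ε : ℝ, 0 < ε → ∀ x y : Config V n, y ≠ x →
      (¬ ∃ i j : V, i ≠ j ∧ G.Adj i j ∧ 1 ≤ x.val i ∧ y.val = move x.val i j) →
      P ε x y = 0)
    (hPdiag : ∀ ε : ℝ, 0 < ε → ∀ x : Config V n,
      P ε x x = 1 - ∑ y ∈ Finset.univ.erase x, P ε x y) :
    (∀ ε : ℝ, 0 < ε →
      (∀ x y : Config V n, 0 ≤ P ε x y) ∧ ∀ x : Config V n, ∑ y, P ε x y = 1) ∧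
    (∀ (x y : Config V n) (i j : V), (G.Adj i j ∨ j = i) → 1 ≤ x.val i →
      y.val = move x.val i j →
      IsTheta (fun ε => P ε x y) (if x.val j = 0 then 1 else 0)) := by
  classical
  have hn0 : (0 : ℝ) < n := by exact_mod_cast hn
  have hxle : ∀ (x : Config V n) (v : V), x.val v ≤ n := fun x v =>
    (Finset.single_le_sum (f := x.val) (fun i _ => Nat.zero_le _) (Finset.mem_univ v)).trans
      (le_of_eq x.2)
  -- degree is positive wherever there is an edge
  have hd1 : ∀ {i j : V}, G.Adj i j → 1 ≤ d := by
    intro i j hadj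
    have h0 : 0 < G.degree i := (G.degree_pos_iff_exists_adj i).mpr ⟨j, hadj⟩
    rw [hreg i] at h0
    omega
  -- off-diagonal entries are nonnegative
  have hP0 : ∀ ε : ℝ, 0 < ε → ∀ x y : Config V n, y ≠ x → 0 ≤ P ε x y := by
    intro ε hε x y hyx
    by_cases h : ∃ i j : V, i ≠ j ∧ G.Adj i j ∧ 1 ≤ x.val i ∧ y.val = move x.val i j
    · obtain ⟨i, j, hij, hadj, hxi, hy⟩ := h
      rw [hPmove ε hε x y i j hij hadj hxi hy]
      have h1 := hfpos ε hε (x.val j)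
      have h2 := hfpos ε hε (x.val i)
      have h3 : (0:ℝ) ≤ f ε (x.val j) / (f ε (x.val j) + f ε (x.val i)) :=
        div_nonneg h1.le (by linarith)
      exact mul_nonneg (by positivity) h3
    · rw [hPoff ε hε x y hyx h]
  -- the key bound on the off-diagonal row sum
  have key : ∀ ε : ℝ, 0 < ε → ∀ (x : Config V n) (ρ : ℝ), 0 ≤ ρ →
      (∀ i j : V, G.Adj i j → 1 ≤ x.val i →
        f ε (x.val j) / (f ε (x.val j) + f ε (x.val i)) ≤ ρ) →
      ∑ y ∈ Finset.univ.erase x, P ε x y ≤ ρ := by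
    intro ε hε x ρ hρ hrat
    set S : Finset (V × V) :=
      Finset.univ.filter (fun p : V × V => G.Adj p.1 p.2 ∧ 1 ≤ x.val p.1) with hSdef
    have hSmem : ∀ p : V × V, p ∈ S ↔ G.Adj p.1 p.2 ∧ 1 ≤ x.val p.1 := by
      intro p; simp [hSdef]
    let g : V × V → Config V n := fun p =>
      if h : G.Adj p.1 p.2 ∧ 1 ≤ x.val p.1 then
        ⟨move x.val p.1 p.2, by rw [sum_move x.val h.1.ne h.2]; exact x.2⟩
      else x
    have hgval : ∀ p ∈ S, (g p).val = move x.val p.1 p.2 := by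
      intro p hp
      have h := (hSmem p).mp hp
      simp only [g, dif_pos h]
    have hgne : ∀ p ∈ S, g p ≠ x := by
      intro p hp hc
      have h := (hSmem p).mp hp
      exact move_ne x.val h.1.ne (by rw [← hgval p hp, hc])
    set T : Finset (Config V n) := S.image g with hTdef
    have hTsub : T ⊆ Finset.univ.erase x := by
      intro y hy
      obtain ⟨p, hp, rfl⟩ := Finset.mem_image.mp hy
      exact Finset.mem_erase.mpr ⟨hgne p hp, Finset.mem_univ _⟩
    have hzero : ∀ y ∈ Finset.univ.erase x, y ∉ T → P ε x y = 0 := by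
      intro y hy hyT
      refine hPoff ε hε x y (Finset.mem_erase.mp hy).1 ?_
      rintro ⟨i, j, hij, hadj, hxi, hmv⟩
      refine hyT (Finset.mem_image.mpr ⟨(i, j), (hSmem (i, j)).mpr ⟨hadj, hxi⟩, ?_⟩)
      refine Subtype.ext ?_
      rw [hgval (i, j) ((hSmem (i, j)).mpr ⟨hadj, hxi⟩), hmv]
    have hsum1 : ∑ y ∈ Finset.univ.erase x, P ε x y = ∑ y ∈ T, P ε x y :=
      (Finset.sum_subset hTsub hzero).symm
    have hginj : ∀ p ∈ S, ∀ q ∈ S, g p = g q → p = q := by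
      intro p hp q hq hpq
      have h1 := (hSmem p).mp hp
      have h2 := (hSmem q).mp hq
      have : move x.val p.1 p.2 = move x.val q.1 q.2 := by
        rw [← hgval p hp, ← hgval q hq, hpq]
      obtain ⟨e1, e2⟩ := move_inj x.val h1.1.ne h2.1.ne h1.2 this
      exact Prod.ext e1 e2
    rw [hsum1, hTdef, Finset.sum_image hginj]
    -- bound each term
    have hterm : ∀ p ∈ S, P ε x (g p) ≤ (1 / (d : ℝ)) * ((x.val p.1 : ℝ) / n) * ρ := by
      intro p hp
      have h := (hSmem p).mp hp
      rw [hPmove ε hε x (g p) p.1 p.2 h.1.ne h.1 h.2 (hgval p hp)]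
      have hnum : f ε (x.val p.2) / (f ε (x.val p.2) + f ε (x.val p.1)) ≤ ρ :=
        hrat p.1 p.2 h.1 h.2
      have hdpos : (0:ℝ) < d := by exact_mod_cast hd1 h.1
      have hnn : (0:ℝ) ≤ (1 / (d : ℝ)) * ((x.val p.1 : ℝ) / n) := by positivity
      exact mul_le_mul_of_nonneg_left hnum hnn
    refine le_trans (Finset.sum_le_sum hterm) ?_
    rcases S.eq_empty_or_nonempty with hSe | ⟨p0, hp0⟩
    · rw [hSe]; simpa using hρ
    have hdpos : (0:ℝ) < d := by exact_mod_cast hd1 ((hSmem p0).mp hp0).1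
    -- sum over S of x_{p.1} is at most d * n
    have hsle : ∑ p ∈ S, (x.val p.1 : ℝ) ≤ (d : ℝ) * n := by
      have hsub : S ⊆ Finset.univ.filter (fun p : V × V => G.Adj p.1 p.2) := by
        intro p hp
        simp only [Finset.mem_filter, Finset.mem_univ, true_and]
        exact ((hSmem p).mp hp).1
      have h1 : ∑ p ∈ S, (x.val p.1 : ℝ) ≤
          ∑ p ∈ Finset.univ.filter (fun p : V × V => G.Adj p.1 p.2), (x.val p.1 : ℝ) :=
        Finset.sum_le_sum_of_subset_of_nonneg hsub (fun p _ _ => by positivity)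
      have h2 : ∑ p ∈ Finset.univ.filter (fun p : V × V => G.Adj p.1 p.2), (x.val p.1 : ℝ)
          = (d : ℝ) * n := by
        rw [Finset.sum_filter, Fintype.sum_prod_type]
        have h3 : ∀ i : V, (∑ j : V, if G.Adj i j then (x.val i : ℝ) else 0)
            = (d : ℝ) * (x.val i : ℝ) := by
          intro i
          rw [← Finset.sum_filter, Finset.sum_const, nsmul_eq_mul]
          congr 1
          rw [← SimpleGraph.neighborFinset_eq_filter, ← SimpleGraph.degree, hreg i]
        rw [Finset.sum_congr rfl (fun i _ => h3 i), ← Finset.mul_sum]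
        congr 1
        rw [← Nat.cast_sum, x.2]
      linarith
    calc ∑ p ∈ S, (1 / (d : ℝ)) * ((x.val p.1 : ℝ) / n) * ρ
        = (1 / ((d : ℝ) * n)) * ρ * ∑ p ∈ S, (x.val p.1 : ℝ) := by
          rw [Finset.mul_sum]; exact Finset.sum_congr rfl fun p _ => by field_simp
      _ ≤ (1 / ((d : ℝ) * n)) * ρ * ((d : ℝ) * n) := by
          apply mul_le_mul_of_nonneg_left hsle; positivity
      _ = ρ := by field_simp
  -- ratios are always ≤ 1
  have hrat1 : ∀ ε : ℝ, 0 < ε → ∀ a b : ℕ, f ε a / (f ε a + f ε b) ≤ 1 := by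
    intro ε hε a b
    have h1 := hfpos ε hε a
    have h2 := hfpos ε hε b
    rw [div_le_one (by linarith)]; linarith
  constructor
  · -- stochasticity
    intro ε hε
    constructor
    · intro x y
      by_cases hyx : y = x
      · rw [hyx, hPdiag ε hε x]
        have := key ε hε x 1 zero_le_one (fun i j _ _ => hrat1 ε hε _ _)
        linarith
      · exact hP0 ε hε x y hyx
    · intro x
      rw [← Finset.add_sum_erase _ _ (Finset.mem_univ x), hPdiag ε hε x]
      ring
  · -- clustering property
    choose M₁ M₂ eb hM₁ hM₂ heb hbound using hfΘ
    set s0 : Finset ℕ := Finset.range (n + 1) with hs0def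
    have hs0ne : s0.Nonempty := ⟨0, by simp [hs0def]⟩
    set s1 : Finset ℕ := Finset.Icc 1 n with hs1def
    have hs1ne : s1.Nonempty := ⟨1, by simp [hs1def, hn]⟩
    set c : ℝ := s1.inf' hs1ne M₁ with hcdef
    set C : ℝ := s0.sup' hs0ne M₂ with hCdef
    set εb : ℝ := min 1 (s0.inf' hs0ne eb) with hεbdef
    have hc : 0 < c := (Finset.lt_inf'_iff hs1ne).mpr fun p _ => hM₁ p
    have hC : 0 < C := lt_of_lt_of_le (hM₂ 0) (Finset.le_sup' M₂ (by simp [hs0def]))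
    have hεb : 0 < εb := lt_min one_pos ((Finset.lt_inf'_iff hs0ne).mpr fun p _ => heb p)
    have hεb1 : εb ≤ 1 := min_le_left _ _
    have hεble : ∀ p ≤ n, εb ≤ eb p := fun p hp =>
      le_trans (min_le_right _ _) (Finset.inf'_le eb (by simp [hs0def]; omega))
    have hCub : ∀ p ≤ n, M₂ p ≤ C := fun p hp => Finset.le_sup' M₂ (by simp [hs0def]; omega)
    have hclb : ∀ p, 1 ≤ p → p ≤ n → c ≤ M₁ p := fun p h1 h2 =>
      Finset.inf'_le M₁ (by simp [hs1def]; omega)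
    -- bounds on f on (0, εb)
    have hfub : ∀ p ≤ n, ∀ ε : ℝ, 0 < ε → ε < εb → f ε p ≤ C := by
      intro p hp ε hε hεlt
      have hb := (hbound p ε hε (lt_of_lt_of_le hεlt (hεble p hp))).2
      by_cases hp0 : p = 0
      · rw [if_pos hp0, zpow_one] at hb
        have : M₂ p * ε ≤ M₂ p * 1 :=
          mul_le_mul_of_nonneg_left (by linarith [lt_of_lt_of_le hεlt hεb1]) (hM₂ p).le
        calc f ε p ≤ M₂ p * ε := hb
          _ ≤ M₂ p * 1 := this
          _ = M₂ p := mul_one _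
          _ ≤ C := hCub p hp
      · rw [if_neg hp0, zpow_zero, mul_one] at hb
        exact hb.trans (hCub p hp)
    have hflb : ∀ p, 1 ≤ p → p ≤ n → ∀ ε : ℝ, 0 < ε → ε < εb → c ≤ f ε p := by
      intro p h1 h2 ε hε hεlt
      have hb := (hbound p ε hε (lt_of_lt_of_le hεlt (hεble p h2))).1
      rw [if_neg (by omega), zpow_zero, mul_one] at hb
      exact (hclb p h1 h2).trans hb
    have hf0lb : ∀ ε : ℝ, 0 < ε → ε < εb → M₁ 0 * ε ≤ f ε 0 := by
      intro ε hε hεlt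
      have hb := (hbound 0 ε hε (lt_of_lt_of_le hεlt (hεble 0 (by omega)))).1
      rwa [if_pos rfl, zpow_one] at hb
    have hf0ub : ∀ ε : ℝ, 0 < ε → ε < εb → f ε 0 ≤ M₂ 0 * ε := by
      intro ε hε hεlt
      have hb := (hbound 0 ε hε (lt_of_lt_of_le hεlt (hεble 0 (by omega)))).2
      rwa [if_pos rfl, zpow_one] at hb
    intro x y i j hor hxi hy
    have hxin : x.val i ≤ n := hxle x i
    have hxjn : x.val j ≤ n := hxle x j
    rcases hor with hadj | hji
    · -- off-diagonal case
      have hij : i ≠ j := hadj.ne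
      have hdpos : (0:ℝ) < d := by exact_mod_cast hd1 hadj
      have hxipos : (1:ℝ) ≤ (x.val i : ℝ) := by exact_mod_cast hxi
      have hxiR : (0:ℝ) < (x.val i : ℝ) := by linarith
      have hxinR : (x.val i : ℝ) ≤ n := by exact_mod_cast hxin
      have hd1R : (1:ℝ) ≤ d := by exact_mod_cast hd1 hadj
      have h2C : (0:ℝ) < 2 * C := by linarith
      have hPval : ∀ ε : ℝ, 0 < ε → P ε x y = (1 / (d : ℝ)) * ((x.val i : ℝ) / n) *
          (f ε (x.val j) / (f ε (x.val j) + f ε (x.val i))) :=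
        fun ε hε => hPmove ε hε x y i j hij hadj hxi hy
      have hbase : (0:ℝ) < (1 / (d : ℝ)) * ((x.val i : ℝ) / n) :=
        mul_pos (div_pos one_pos hdpos) (div_pos hxiR hn0)
      have hbase' : (0:ℝ) < (1 / (d : ℝ)) * (1 / (n : ℝ)) :=
        mul_pos (div_pos one_pos hdpos) (div_pos one_pos hn0)
      have hbaseb : (1 / (d : ℝ)) * (1 / (n : ℝ)) ≤ (1 / (d : ℝ)) * ((x.val i : ℝ) / n) := by
        exact mul_le_mul_of_nonneg_left ((div_le_div_iff_of_pos_right hn0).mpr hxipos) (by positivity)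
      have hbase1 : (1 / (d : ℝ)) * ((x.val i : ℝ) / n) ≤ 1 := by
        have ha : 1 / (d:ℝ) ≤ 1 := by rw [div_le_one hdpos]; exact hd1R
        have hb : (x.val i : ℝ) / n ≤ 1 := by rw [div_le_one hn0]; exact hxinR
        nlinarith [hbase.le, mul_le_mul ha hb (by positivity) (by positivity)]
      by_cases hxj : x.val j = 0
      · rw [if_pos hxj]
        refine ⟨(1 / (d : ℝ)) * (1 / n) * (M₁ 0 / (2 * C)), M₂ 0 / c, εb,
          mul_pos hbase' (div_pos (hM₁ 0) h2C), div_pos (hM₂ 0) hc, hεb, ?_⟩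
        intro ε hε hεlt
        have hFi1 : c ≤ f ε (x.val i) := hflb _ hxi hxin ε hε hεlt
        have hFiC : f ε (x.val i) ≤ C := hfub _ hxin ε hε hεlt
        have hF0C : f ε 0 ≤ C := hfub 0 (by omega) ε hε hεlt
        have hF0l := hf0lb ε hε hεlt
        have hF0u := hf0ub ε hε hεlt
        have hF0p := hfpos ε hε 0
        have hFip := hfpos ε hε (x.val i)
        simp only [hPval ε hε, hxj, zpow_one]
        constructor
        · have hratlb : M₁ 0 * ε / (2 * C) ≤ f ε 0 / (f ε 0 + f ε (x.val i)) :=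
            div_le_div₀ hF0p.le hF0l (by linarith) (by linarith)
          have hnn : (0:ℝ) ≤ M₁ 0 * ε / (2 * C) :=
            div_nonneg (mul_nonneg (hM₁ 0).le hε.le) h2C.le
          calc (1 / (d : ℝ)) * (1 / (n:ℝ)) * (M₁ 0 / (2 * C)) * ε
              = (1 / (d : ℝ)) * (1 / (n:ℝ)) * (M₁ 0 * ε / (2 * C)) := by ring
            _ ≤ (1 / (d : ℝ)) * ((x.val i : ℝ) / n) *
                (f ε 0 / (f ε 0 + f ε (x.val i))) :=
                mul_le_mul hbaseb hratlb hnn hbase.le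
        · have hratub : f ε 0 / (f ε 0 + f ε (x.val i)) ≤ M₂ 0 * ε / c :=
            div_le_div₀ (mul_nonneg (hM₂ 0).le hε.le) hF0u hc (by linarith)
          calc (1 / (d : ℝ)) * ((x.val i : ℝ) / n) *
              (f ε 0 / (f ε 0 + f ε (x.val i)))
              ≤ 1 * (M₂ 0 * ε / c) := by
                apply mul_le_mul hbase1 hratub _ zero_le_one
                exact div_nonneg hF0p.le (by linarith)
            _ = M₂ 0 / c * ε := by ring
      · rw [if_neg hxj]
        refine ⟨(1 / (d : ℝ)) * (1 / n) * (c / (2 * C)), 1, εb,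
          mul_pos hbase' (div_pos hc h2C), one_pos, hεb, ?_⟩
        intro ε hε hεlt
        have hFj1 : c ≤ f ε (x.val j) := hflb _ (by omega) hxjn ε hε hεlt
        have hFjC : f ε (x.val j) ≤ C := hfub _ hxjn ε hε hεlt
        have hFiC : f ε (x.val i) ≤ C := hfub _ hxin ε hε hεlt
        have hFjp := hfpos ε hε (x.val j)
        have hFip := hfpos ε hε (x.val i)
        simp only [hPval ε hε, zpow_zero, mul_one]
        constructor
        · have hratlb : c / (2 * C) ≤ f ε (x.val j) / (f ε (x.val j) + f ε (x.val i)) :=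
            div_le_div₀ hFjp.le hFj1 (by linarith) (by linarith)
          exact mul_le_mul hbaseb hratlb (div_nonneg hc.le h2C.le) hbase.le
        · calc (1 / (d : ℝ)) * ((x.val i : ℝ) / n) *
              (f ε (x.val j) / (f ε (x.val j) + f ε (x.val i)))
              ≤ 1 * 1 := by
                apply mul_le_mul hbase1 (hrat1 ε hε _ _) _ zero_le_one
                exact div_nonneg hFjp.le (by linarith)
            _ = 1 := mul_one 1
    · -- diagonal case: j = i
      subst hji
      have hyx : y = x := Subtype.ext (by rw [hy, move, if_pos rfl])
      rw [hyx, if_neg (show ¬ x.val j = 0 by omega)]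
      refine ⟨c / (C + c), 1, εb, by positivity, one_pos, hεb, ?_⟩
      intro ε hε hεlt
      simp only [zpow_zero, mul_one]
      have hsumle : ∑ z ∈ Finset.univ.erase x, P ε x z ≤ C / (C + c) := by
        apply key ε hε x (C / (C + c)) (by positivity)
        intro a b hadj hxa
        have hFb : f ε (x.val b) ≤ C := hfub _ (hxle x b) ε hε hεlt
        have hFa : c ≤ f ε (x.val a) := hflb _ hxa (hxle x a) ε hε hεlt
        have hFbp := hfpos ε hε (x.val b)
        have hFap := hfpos ε hε (x.val a)
        rw [div_le_div_iff₀ (by linarith) (by positivity)]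
        have h1 : f ε (x.val b) * c ≤ C * c := mul_le_mul_of_nonneg_right hFb hc.le
        have h2 : C * c ≤ C * f ε (x.val a) := mul_le_mul_of_nonneg_left hFa hC.le
        nlinarith
      have hsum0 : (0:ℝ) ≤ ∑ z ∈ Finset.univ.erase x, P ε x z :=
        Finset.sum_nonneg fun z hz => hP0 ε hε x z (Finset.mem_erase.mp hz).1
      have hsplit : C / (C + c) + c / (C + c) = 1 := by field_simp
      simp only [hPdiag ε hε x]
      constructor <;> linarith
end
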